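/- arXiv:2206.01379 — 10 statements merged into one kernel-verified Lean document; each statement's English description precedes it below -/
import Mathlib

section
/- One push operation preserves the propagation invariant (Lemma 1): Suppose x, π̂, r ∈ ℝ^n satisfy the invariant π̂ + α·r = α·x + (1−α)·P·π̂. Fix a node u ∈ V, let y = r(u), and perform one push operation at u, i.e. set π̂′ = π̂ + α·y·e_u and r′ = r − y·e_u + (1−α)·y·P·e_u, where e_u is the u-th standard basis vector. Then π̂′ + α·r′ = α·x + (1−α)·P·π̂′. Moreover, the initialization π̂ = 0, r = x satisfies the invariant; hence the invariant is maintained throughout the propagation process. -/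
/-- One push operation preserves the propagation invariant (Lemma 1), and the
initialization `π̂ = 0, r = x` satisfies the invariant. -/
theorem push_preserves_invariant {n : ℕ} (hn : 1 ≤ n)
    (A : Matrix (Fin n) (Fin n) ℝ) (hA_symm : A.IsSymm)
    (hA01 : ∀ s t, A s t = 0 ∨ A s t = 1)
    (d : Fin n → ℝ) (hd : ∀ s, d s = ∑ t, A s t) (hd1 : ∀ s, 1 ≤ d s)
    (β : ℝ) (hβ0 : 0 ≤ β) (hβ1 : β ≤ 1)
    (P : Matrix (Fin n) (Fin n) ℝ)
    (hP : ∀ s t, P s t = A s t / (d s ^ β * d t ^ (1 - β)))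
    (α : ℝ) (hα0 : 0 < α) (hα1 : α < 1)
    (x πh r : Fin n → ℝ)
    (hinv : πh + α • r = α • x + (1 - α) • (P.mulVec πh))
    (u : Fin n) (y : ℝ) (hy : y = r u)
    (πh' r' : Fin n → ℝ)
    (hπh' : πh' = πh + (α * y) • (Pi.single u 1 : Fin n → ℝ))
    (hr' : r' = r - y • (Pi.single u 1 : Fin n → ℝ)
        + ((1 - α) * y) • (P.mulVec ((Pi.single u 1 : Fin n → ℝ)))) :
    (πh' + α • r' = α • x + (1 - α) • (P.mulVec πh')) ∧
    ((0 : Fin n → ℝ) + α • x = α • x + (1 - α) • (P.mulVec (0 : Fin n → ℝ))) := by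
  constructor
  · subst hπh' hr'
    have h := congrFun hinv
    funext i
    have hi := h i
    simp only [Matrix.mulVec_add, Matrix.mulVec_smul, Pi.add_apply, Pi.sub_apply,
      Pi.smul_apply, smul_eq_mul] at hi ⊢
    ring_nf
    ring_nf at hi
    linarith
  · simp [Matrix.mulVec_zero]
end

section
/- Error bound for the approximate propagation vector (Error Analysis theorem): Let ε > 0, x ∈ ℝ^n, and let π = ∑_{ℓ=0}^∞ α(1−α)^ℓ P^ℓ x be the exact propagation vector. Suppose π̂, r ∈ ℝ^n satisfy π = π̂ + α·(I − (1−α)P)^{−1}·r, and |r(t)| ≤ ε·d(t)^{1−β} for every node t ∈ V. Then |π̂(s) − π(s)| ≤ ε·d(s)^{1−β} for every node s ∈ V. -/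
/-- Error bound for the approximate propagation vector (Error Analysis theorem). -/
theorem approx_propagation_error_bound {n : ℕ} (hn : 1 ≤ n)
    (A : Matrix (Fin n) (Fin n) ℝ) (hA_symm : A.IsSymm)
    (hA01 : ∀ s t, A s t = 0 ∨ A s t = 1)
    (d : Fin n → ℝ) (hd : ∀ s, d s = ∑ t, A s t) (hd1 : ∀ s, 1 ≤ d s)
    (β : ℝ) (hβ0 : 0 ≤ β) (hβ1 : β ≤ 1)
    (P : Matrix (Fin n) (Fin n) ℝ)
    (hP : ∀ s t, P s t = A s t / (d s ^ β * d t ^ (1 - β)))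
    (α : ℝ) (hα0 : 0 < α) (hα1 : α < 1)
    (ε : ℝ) (hε : 0 < ε)
    (x π πh r : Fin n → ℝ)
    (hπ : HasSum (fun ℓ : ℕ => (α * (1 - α) ^ ℓ) • ((P ^ ℓ).mulVec x)) π)
    (hunit : IsUnit (1 - (1 - α) • P))
    (hinv2 : π = πh + α • ((1 - (1 - α) • P)⁻¹.mulVec r))
    (hr : ∀ t, |r t| ≤ ε * d t ^ (1 - β)) :
    ∀ s, |πh s - π s| ≤ ε * d s ^ (1 - β) := by
  have hdpos : ∀ s, (0:ℝ) < d s := fun s => lt_of_lt_of_le one_pos (hd1 s)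
  have hdbpos : ∀ s, (0:ℝ) < d s ^ (1 - β) := fun s =>
    Real.rpow_pos_of_pos (hdpos s) _
  have hdβpos : ∀ s, (0:ℝ) < d s ^ β := fun s => Real.rpow_pos_of_pos (hdpos s) _
  have hPnn : ∀ s t, 0 ≤ P s t := by
    intro s t
    rw [hP]
    rcases hA01 s t with h | h <;> rw [h]
    · simp
    · exact div_nonneg zero_le_one (mul_pos (hdβpos s) (hdbpos t)).le
  -- row sum identity
  have hrow : ∀ s, ∑ t, P s t * d t ^ (1 - β) = d s ^ (1 - β) := by
    intro s
    have : ∀ t, P s t * d t ^ (1 - β) = A s t / d s ^ β := by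
      intro t
      rw [hP, div_mul_eq_mul_div, mul_comm (d s ^ β), ← div_div, mul_div_assoc,
        div_self (hdbpos t).ne', mul_one]
    simp_rw [this]
    rw [← Finset.sum_div, ← hd s]
    rw [show (1 : ℝ) - β = 1 - β from rfl]
    rw [Real.rpow_sub (hdpos s), Real.rpow_one]
  set M : Matrix (Fin n) (Fin n) ℝ := 1 - (1 - α) • P with hM
  set y : Fin n → ℝ := M⁻¹.mulVec r with hy
  have hdet : IsUnit M.det := (Matrix.isUnit_iff_isUnit_det M).mp hunit
  have hMy : M.mulVec y = r := by
    rw [hy, Matrix.mulVec_mulVec, Matrix.mul_nonsing_inv M hdet, Matrix.one_mulVec]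
  have hcomp : ∀ s, y s = r s + (1 - α) * (P.mulVec y) s := by
    intro s
    have := congrFun hMy s
    rw [hM, Matrix.sub_mulVec, Matrix.one_mulVec, Matrix.smul_mulVec] at this
    simp only [Pi.sub_apply, Pi.smul_apply, smul_eq_mul] at this
    linarith
  -- maximum of |y s| / d s ^ (1-β)
  have hne : (Finset.univ : Finset (Fin n)).Nonempty := by
    haveI : NeZero n := ⟨Nat.one_le_iff_ne_zero.mp hn⟩
    exact Finset.univ_nonempty
  obtain ⟨s0, -, hs0⟩ := Finset.exists_max_image Finset.univ
    (fun t => |y t| / d t ^ (1 - β)) hne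
  set K : ℝ := |y s0| / d s0 ^ (1 - β) with hK
  have hKnn : 0 ≤ K := div_nonneg (abs_nonneg _) (hdbpos s0).le
  have hybound : ∀ t, |y t| ≤ K * d t ^ (1 - β) := by
    intro t
    have h1 : |y t| / d t ^ (1 - β) ≤ K := hs0 t (Finset.mem_univ t)
    calc |y t| = |y t| / d t ^ (1 - β) * d t ^ (1 - β) := by
          rw [div_mul_cancel₀ _ (hdbpos t).ne']
      _ ≤ K * d t ^ (1 - β) := by
          exact mul_le_mul_of_nonneg_right h1 (hdbpos t).le
  -- bound on |y s0|
  have hmain : |y s0| ≤ ε * d s0 ^ (1 - β) + (1 - α) * (K * d s0 ^ (1 - β)) := by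
    have hPy : |(P.mulVec y) s0| ≤ K * d s0 ^ (1 - β) := by
      have h1 : |(P.mulVec y) s0| ≤ ∑ t, P s0 t * |y t| := by
        rw [Matrix.mulVec, dotProduct]
        refine (Finset.abs_sum_le_sum_abs _ _).trans ?_
        refine Finset.sum_le_sum fun t _ => ?_
        rw [abs_mul, abs_of_nonneg (hPnn s0 t)]
      refine h1.trans ?_
      calc ∑ t, P s0 t * |y t| ≤ ∑ t, P s0 t * (K * d t ^ (1 - β)) :=
            Finset.sum_le_sum fun t _ =>
              mul_le_mul_of_nonneg_left (hybound t) (hPnn s0 t)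
        _ = K * ∑ t, P s0 t * d t ^ (1 - β) := by
            rw [Finset.mul_sum]; congr 1; funext t; ring
        _ = K * d s0 ^ (1 - β) := by rw [hrow]
    calc |y s0| = |r s0 + (1 - α) * (P.mulVec y) s0| := by rw [← hcomp]
      _ ≤ |r s0| + |(1 - α) * (P.mulVec y) s0| := abs_add_le _ _
      _ ≤ ε * d s0 ^ (1 - β) + (1 - α) * (K * d s0 ^ (1 - β)) := by
          refine add_le_add (hr s0) ?_
          rw [abs_mul, abs_of_nonneg (by linarith : (0:ℝ) ≤ 1 - α)]
          exact mul_le_mul_of_nonneg_left hPy (by linarith)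
  have hKle : K ≤ ε / α := by
    have h2 : K * d s0 ^ (1 - β) = |y s0| := by
      rw [hK, div_mul_cancel₀ _ (hdbpos s0).ne']
    have h4 : α * K * d s0 ^ (1 - β) ≤ ε * d s0 ^ (1 - β) := by nlinarith [hmain, h2]
    have h5 : α * K ≤ ε := le_of_mul_le_mul_right (by linarith [h4]) (hdbpos s0)
    rw [le_div_iff₀ hα0]
    linarith
  intro s
  have hπs := congrFun hinv2 s
  simp only [Pi.add_apply, Pi.smul_apply, smul_eq_mul] at hπs
  have : πh s - π s = -(α * y s) := by rw [hπs]; ring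
  rw [this, abs_neg, abs_mul, abs_of_pos hα0]
  calc α * |y s| ≤ α * (K * d s ^ (1 - β)) :=
        mul_le_mul_of_nonneg_left (hybound s) hα0.le
    _ ≤ α * ((ε / α) * d s ^ (1 - β)) := by
        refine mul_le_mul_of_nonneg_left ?_ hα0.le
        exact mul_le_mul_of_nonneg_right hKle (hdbpos s).le
    _ = ε * d s ^ (1 - β) := by field_simp
end

section
/- Cost identity of Theorem 1 (initialization cost of the basic propagation algorithm): Let ε > 0 and let x ∈ ℝ^n have nonnegative entries, with exact propagation vector π = ∑_{ℓ=0}^∞ α(1−α)^ℓ P^ℓ x. Suppose π̂, r ∈ ℝ^n have nonnegative entries and satisfy the invariant π̂ + α·r = α·x + (1−α)·P·π̂. Then the quantity T_init := (1/(αε))·∑_{s∈V} d(s)^β·π̂(s) — which upper-bounds the number of elementary operations of the basic propagation algorithm producing (π̂, r) — satisfies T_init = (1/(αε))·( ‖D^β·π‖₁ − ∑_{t∈V} Φ(t)·r(t) ), where ‖D^β·π‖₁ = ∑_{s∈V} d(s)^β·|π(s)|, q(s,t) := d(s)^{1−β}·π_s(t)·d(t)^{β−1}, and Φ(t) := ∑_{s∈V}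 d(s)^β·q(s,t). -/
open Matrix Finset Filter

/-- Cost identity of Theorem 1 (initialization cost of the basic propagation
algorithm): `T_init = (1/(αε)) · (‖D^β·π‖₁ − ∑_t Φ(t)·r(t))`. -/
theorem initialization_cost_identity {n : ℕ} (hn : 1 ≤ n)
    (A : Matrix (Fin n) (Fin n) ℝ) (hA_symm : A.IsSymm)
    (hA01 : ∀ s t, A s t = 0 ∨ A s t = 1)
    (d : Fin n → ℝ) (hd : ∀ s, d s = ∑ t, A s t) (hd1 : ∀ s, 1 ≤ d s)
    (β : ℝ) (hβ0 : 0 ≤ β) (hβ1 : β ≤ 1)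
    (P : Matrix (Fin n) (Fin n) ℝ)
    (hP : ∀ s t, P s t = A s t / (d s ^ β * d t ^ (1 - β)))
    (α : ℝ) (hα0 : 0 < α) (hα1 : α < 1)
    (ε : ℝ) (hε : 0 < ε)
    (x : Fin n → ℝ) (hx : ∀ s, 0 ≤ x s)
    (π : Fin n → ℝ)
    (hπ : HasSum (fun ℓ : ℕ => (α * (1 - α) ^ ℓ) • ((P ^ ℓ).mulVec x)) π)
    (πh r : Fin n → ℝ) (hπh : ∀ s, 0 ≤ πh s) (hr : ∀ s, 0 ≤ r s)
    (hinv : πh + α • r = α • x + (1 - α) • (P.mulVec πh))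
    (πs : Fin n → Fin n → ℝ)
    (hppr : ∀ s, HasSum
      (fun ℓ : ℕ => (α * (1 - α) ^ ℓ) •
        (((A * Matrix.diagonal fun t => (d t)⁻¹) ^ ℓ).mulVec
          (Pi.single s 1 : Fin n → ℝ))) (πs s)) :
    (1 / (α * ε)) * ∑ s, d s ^ β * πh s =
      (1 / (α * ε)) * ((∑ s, d s ^ β * |π s|) -
        ∑ t, (∑ s, d s ^ β * (d s ^ (1 - β) * πs s t * d t ^ (β - 1))) * r t) := by
  have hd0 : ∀ s, (0:ℝ) < d s := fun s => lt_of_lt_of_le one_pos (hd1 s)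
  have hdne : ∀ s, d s ≠ 0 := fun s => (hd0 s).ne'
  have hA0 : ∀ s t, 0 ≤ A s t := fun s t => by rcases hA01 s t with h | h <;> simp [h]
  have hAsym : ∀ s t, A s t = A t s := fun s t => by
    conv_lhs => rw [← hA_symm]
    rfl
  set W : Matrix (Fin n) (Fin n) ℝ := A * Matrix.diagonal (fun t => (d t)⁻¹) with hWdef
  have hWentry : ∀ s t, W s t = A s t * (d t)⁻¹ := fun s t => by
    rw [hWdef, Matrix.mul_diagonal]
  have hWnn : ∀ s t, 0 ≤ W s t := fun s t => by
    rw [hWentry]; exact mul_nonneg (hA0 s t) (inv_nonneg.2 (hd0 t).le)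
  have hWcol : ∀ u, ∑ s, W s u = 1 := by
    intro u
    have hcol : ∑ s, A s u = d u := by
      rw [hd u]; exact Finset.sum_congr rfl fun s _ => hAsym s u
    simp only [hWentry, ← Finset.sum_mul, hcol]
    exact mul_inv_cancel₀ (hdne u)
  have hWpow_nn : ∀ (ℓ : ℕ) s t, 0 ≤ (W ^ ℓ) s t := by
    intro ℓ
    induction ℓ with
    | zero => intro s t; rw [pow_zero, Matrix.one_apply]; split <;> norm_num
    | succ ℓ ih =>
      intro s t
      rw [pow_succ, Matrix.mul_apply]
      exact Finset.sum_nonneg fun u _ => mul_nonneg (ih s u) (hWnn u t)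
  have hWpow_col : ∀ (ℓ : ℕ) t, ∑ s, (W ^ ℓ) s t = 1 := by
    intro ℓ
    induction ℓ with
    | zero => intro t; simp [Matrix.one_apply]
    | succ ℓ ih =>
      intro t
      rw [pow_succ]
      simp only [Matrix.mul_apply]
      rw [Finset.sum_comm]
      have : ∀ u, ∑ s, (W ^ ℓ) s u * W u t = W u t := fun u => by
        rw [← Finset.sum_mul, ih u, one_mul]
      simp only [this]
      exact hWcol t
  have hWpow_le_one : ∀ (ℓ : ℕ) s t, (W ^ ℓ) s t ≤ 1 := by
    intro ℓ s t
    rw [← hWpow_col ℓ t]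
    exact Finset.single_le_sum (fun u _ => hWpow_nn ℓ u t) (Finset.mem_univ s)
  -- symmetry : diagonal d * (Wᵀ)^ℓ = W^ℓ * diagonal d
  have hdiag1 : ∀ f g : Fin n → ℝ, (∀ i, f i * g i = 1) →
      Matrix.diagonal f * Matrix.diagonal g = (1 : Matrix (Fin n) (Fin n) ℝ) := by
    intro f g hfg
    rw [Matrix.diagonal_mul_diagonal]
    have : (fun i => f i * g i) = fun _ : Fin n => (1:ℝ) := funext hfg
    rw [this, Matrix.diagonal_one]
  have hDinvD : Matrix.diagonal (fun t => (d t)⁻¹) * Matrix.diagonal d = (1 : Matrix (Fin n) (Fin n) ℝ) :=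
    hdiag1 _ _ fun i => inv_mul_cancel₀ (hdne i)
  have hDDinv : Matrix.diagonal d * Matrix.diagonal (fun t => (d t)⁻¹) = (1 : Matrix (Fin n) (Fin n) ℝ) :=
    hdiag1 _ _ fun i => mul_inv_cancel₀ (hdne i)
  have hWT : Wᵀ = Matrix.diagonal (fun t => (d t)⁻¹) * A := by
    rw [hWdef, Matrix.transpose_mul, Matrix.diagonal_transpose, hA_symm]
  have hDW : ∀ ℓ : ℕ, Matrix.diagonal d * (Wᵀ) ^ ℓ = W ^ ℓ * Matrix.diagonal d := by
    intro ℓ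
    induction ℓ with
    | zero => simp
    | succ ℓ ih =>
      calc Matrix.diagonal d * Wᵀ ^ (ℓ + 1)
          = (Matrix.diagonal d * Wᵀ) * Wᵀ ^ ℓ := by rw [pow_succ', ← Matrix.mul_assoc]
        _ = A * Wᵀ ^ ℓ := by rw [hWT, ← Matrix.mul_assoc, hDDinv, Matrix.one_mul]
        _ = (A * Matrix.diagonal (fun t => (d t)⁻¹)) * (Matrix.diagonal d * Wᵀ ^ ℓ) := by
            rw [Matrix.mul_assoc, ← Matrix.mul_assoc (Matrix.diagonal (fun t => (d t)⁻¹)), hDinvD,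
              Matrix.one_mul]
        _ = W * (W ^ ℓ * Matrix.diagonal d) := by rw [← hWdef, ih]
        _ = W ^ (ℓ + 1) * Matrix.diagonal d := by rw [← Matrix.mul_assoc, ← pow_succ']
  have hWsym : ∀ (ℓ : ℕ) s t, d t * (W ^ ℓ) s t = (W ^ ℓ) t s * d s := by
    intro ℓ s t
    have h := congrFun (congrFun (hDW ℓ) t) s
    rwa [Matrix.diagonal_mul, Matrix.mul_diagonal, ← Matrix.transpose_pow,
      Matrix.transpose_apply] at h
  -- P in terms of W
  have hPpow : ∀ ℓ : ℕ, P ^ ℓ =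
      Matrix.diagonal (fun s => d s ^ (-β)) * W ^ ℓ * Matrix.diagonal (fun t => d t ^ β) := by
    have hP1 : P = Matrix.diagonal (fun s => d s ^ (-β)) * W * Matrix.diagonal (fun t => d t ^ β) := by
      ext s t
      rw [Matrix.mul_diagonal, Matrix.diagonal_mul, hWentry, hP, Real.rpow_neg (hd0 s).le,
        Real.rpow_sub (hd0 t), Real.rpow_one]
      have h1 : d s ^ β ≠ 0 := (Real.rpow_pos_of_pos (hd0 s) β).ne'
      have h2 : d t ^ β ≠ 0 := (Real.rpow_pos_of_pos (hd0 t) β).ne'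
      field_simp
    have hββ : Matrix.diagonal (fun t : Fin n => d t ^ β) * Matrix.diagonal (fun s => d s ^ (-β)) =
        (1 : Matrix (Fin n) (Fin n) ℝ) :=
      hdiag1 _ _ fun i => by rw [← Real.rpow_add (hd0 i), add_neg_cancel, Real.rpow_zero]
    intro ℓ
    induction ℓ with
    | zero =>
      rw [pow_zero, pow_zero, Matrix.mul_one, Matrix.diagonal_mul_diagonal]
      have : (fun i => d i ^ (-β) * d i ^ β) = fun _ : Fin n => (1:ℝ) :=
        funext fun i => by rw [← Real.rpow_add (hd0 i), neg_add_cancel, Real.rpow_zero]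
      rw [this, Matrix.diagonal_one]
    | succ ℓ ih =>
      calc P ^ (ℓ + 1) = P ^ ℓ * P := pow_succ P ℓ
        _ = Matrix.diagonal (fun s => d s ^ (-β)) * W ^ ℓ * (Matrix.diagonal (fun t => d t ^ β) *
            (Matrix.diagonal (fun s => d s ^ (-β)) * W * Matrix.diagonal (fun t => d t ^ β))) := by
            rw [ih, hP1]; rw [Matrix.mul_assoc]
        _ = Matrix.diagonal (fun s => d s ^ (-β)) * W ^ (ℓ + 1) * Matrix.diagonal (fun t => d t ^ β) := by
            rw [← Matrix.mul_assoc (Matrix.diagonal fun t => d t ^ β), ← Matrix.mul_assoc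
              (Matrix.diagonal fun t => d t ^ β), hββ, Matrix.one_mul, pow_succ]
            noncomm_ring
  have hPpow_entry : ∀ (ℓ : ℕ) s t, (P ^ ℓ) s t = d s ^ (-β) * (W ^ ℓ) s t * d t ^ β := by
    intro ℓ s t
    rw [hPpow ℓ, Matrix.mul_diagonal, Matrix.diagonal_mul]
  have hPpow_nn : ∀ (ℓ : ℕ) s t, 0 ≤ (P ^ ℓ) s t := by
    intro ℓ s t
    rw [hPpow_entry]
    exact mul_nonneg (mul_nonneg (Real.rpow_nonneg (hd0 s).le _) (hWpow_nn ℓ s t))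
      (Real.rpow_nonneg (hd0 t).le _)
  -- componentwise PPR sums
  have hπsC : ∀ s t, HasSum (fun ℓ : ℕ => α * (1 - α) ^ ℓ * (W ^ ℓ) t s) (πs s t) := by
    intro s t
    have h := (Pi.hasSum.mp (hppr s)) t
    simpa [Matrix.mulVec_single] using h
  have hπsym : ∀ s t, d s * πs s t = d t * πs t s := by
    intro s t
    have h1 := (hπsC s t).mul_left (d s)
    have h2 := (hπsC t s).mul_left (d t)
    refine h1.unique ?_
    have e : (fun ℓ : ℕ => d t * (α * (1 - α) ^ ℓ * (W ^ ℓ) s t)) =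
        fun ℓ : ℕ => d s * (α * (1 - α) ^ ℓ * (W ^ ℓ) t s) := by
      funext ℓ
      linear_combination (α * (1 - α) ^ ℓ) * (hWsym ℓ s t)
    exact e ▸ h2
  -- y := Σ_P r
  set y : Fin n → ℝ := fun s => ∑ t, d s ^ (-β) * d t ^ β * r t * πs t s with hydef
  have hy : HasSum (fun ℓ : ℕ => (α * (1 - α) ^ ℓ) • ((P ^ ℓ).mulVec r)) y := by
    rw [Pi.hasSum]
    intro s
    have h : ∀ t ∈ Finset.univ, HasSum
        (fun ℓ : ℕ => d s ^ (-β) * d t ^ β * r t * (α * (1 - α) ^ ℓ * (W ^ ℓ) s t))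
        (d s ^ (-β) * d t ^ β * r t * πs t s) := fun t _ => (hπsC t s).mul_left _
    have hs := hasSum_sum h
    have e : (fun ℓ : ℕ => ∑ t, d s ^ (-β) * d t ^ β * r t * (α * (1 - α) ^ ℓ * (W ^ ℓ) s t)) =
        fun ℓ : ℕ => ((α * (1 - α) ^ ℓ) • ((P ^ ℓ).mulVec r)) s := by
      funext ℓ
      simp only [Pi.smul_apply, smul_eq_mul, Matrix.mulVec, dotProduct, Finset.mul_sum]
      refine Finset.sum_congr rfl fun t _ => ?_
      rw [hPpow_entry]
      ring
    rw [e] at hs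
    exact hs
  -- invariant key
  have key : α • (x - r) = πh - (1 - α) • P.mulVec πh := by
    funext s
    have h := congrFun hinv s
    simp only [Pi.add_apply, Pi.smul_apply, smul_eq_mul, Pi.sub_apply] at h ⊢
    linarith
  -- partial sums
  have partial_eq : ∀ L : ℕ, ∑ ℓ ∈ Finset.range L, (α * (1 - α) ^ ℓ) • ((P ^ ℓ).mulVec (x - r)) =
      πh - ((1 - α) ^ L) • ((P ^ L).mulVec πh) := by
    intro L
    induction L with
    | zero => simp [Matrix.one_mulVec]
    | succ L ih =>
      rw [Finset.sum_range_succ, ih]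
      have h2 : (α * (1 - α) ^ L) • ((P ^ L).mulVec (x - r)) =
          ((1 - α) ^ L) • ((P ^ L).mulVec πh) - ((1 - α) ^ (L + 1)) • ((P ^ (L + 1)).mulVec πh) := by
        have h3 : (P ^ L).mulVec (α • (x - r)) =
            (P ^ L).mulVec πh - (1 - α) • ((P ^ (L + 1)).mulVec πh) := by
          rw [key, Matrix.mulVec_sub, Matrix.mulVec_smul, Matrix.mulVec_mulVec, ← pow_succ]
        calc (α * (1 - α) ^ L) • ((P ^ L).mulVec (x - r))
            = ((1 - α) ^ L) • ((P ^ L).mulVec (α • (x - r))) := by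
              rw [Matrix.mulVec_smul, smul_smul, mul_comm]
          _ = ((1 - α) ^ L) • ((P ^ L).mulVec πh - (1 - α) • ((P ^ (L + 1)).mulVec πh)) := by
              rw [h3]
          _ = ((1 - α) ^ L) • ((P ^ L).mulVec πh) - ((1 - α) ^ (L + 1)) • ((P ^ (L + 1)).mulVec πh) := by
              rw [smul_sub, smul_smul, ← pow_succ]
      rw [h2]
      abel
  -- remainder tends to zero
  have hα1' : (0:ℝ) ≤ 1 - α := by linarith
  have hα1'' : (1:ℝ) - α < 1 := by linarith
  have hrem : Tendsto (fun L : ℕ => ((1 - α) ^ L) • ((P ^ L).mulVec πh)) atTop (nhds 0) := by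
    rw [tendsto_pi_nhds]
    intro s
    simp only [Pi.smul_apply, smul_eq_mul, Pi.zero_apply]
    have hC : ∀ L : ℕ, |((P ^ L).mulVec πh) s| ≤ ∑ t, d t ^ β * πh t := by
      intro L
      have h1 : ((P ^ L).mulVec πh) s = ∑ t, (P ^ L) s t * πh t := rfl
      rw [h1, abs_of_nonneg (Finset.sum_nonneg fun t _ => mul_nonneg (hPpow_nn L s t) (hπh t))]
      refine Finset.sum_le_sum fun t _ => ?_
      refine mul_le_mul_of_nonneg_right ?_ (hπh t)
      rw [hPpow_entry]
      calc d s ^ (-β) * (W ^ L) s t * d t ^ β ≤ 1 * 1 * d t ^ β := by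
            refine mul_le_mul_of_nonneg_right ?_ (Real.rpow_nonneg (hd0 t).le β)
            exact mul_le_mul (Real.rpow_le_one_of_one_le_of_nonpos (hd1 s) (neg_nonpos.2 hβ0))
              (hWpow_le_one L s t) (hWpow_nn L s t) zero_le_one
        _ = d t ^ β := by ring
    refine squeeze_zero_norm (a := fun L : ℕ => (∑ t, d t ^ β * πh t) * (1 - α) ^ L) ?_ ?_
    · intro L
      rw [Real.norm_eq_abs, abs_mul, abs_of_nonneg (pow_nonneg hα1' L), mul_comm]
      exact mul_le_mul_of_nonneg_right (hC L) (pow_nonneg hα1' L)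
    · have := (tendsto_pow_atTop_nhds_zero_of_lt_one hα1' hα1'').const_mul (∑ t, d t ^ β * πh t)
      simpa using this
  -- conclude πh = π - y
  have hxr : HasSum (fun ℓ : ℕ => (α * (1 - α) ^ ℓ) • ((P ^ ℓ).mulVec (x - r))) (π - y) := by
    have h := hπ.sub hy
    have e : (fun ℓ : ℕ => (α * (1 - α) ^ ℓ) • ((P ^ ℓ).mulVec x) -
        (α * (1 - α) ^ ℓ) • ((P ^ ℓ).mulVec r)) =
        fun ℓ : ℕ => (α * (1 - α) ^ ℓ) • ((P ^ ℓ).mulVec (x - r)) := by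
      funext ℓ
      rw [Matrix.mulVec_sub, smul_sub]
    rwa [e] at h
  have heq : πh = π - y := by
    have h1 : Tendsto (fun L : ℕ => πh - ((1 - α) ^ L) • ((P ^ L).mulVec πh)) atTop (nhds (π - y)) := by
      have := hxr.tendsto_sum_nat
      simpa only [partial_eq] using this
    have h2 : Tendsto (fun L : ℕ => πh - ((1 - α) ^ L) • ((P ^ L).mulVec πh)) atTop (nhds πh) := by
      have := tendsto_const_nhds (x := πh) (f := atTop (α := ℕ)) |>.sub hrem
      simpa using this
    exact (tendsto_nhds_unique h2 h1)
  -- π nonneg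
  have hπ0 : ∀ s, 0 ≤ π s := by
    intro s
    refine HasSum.nonneg ?_ ((Pi.hasSum.mp hπ) s)
    intro ℓ
    simp only [Pi.smul_apply, smul_eq_mul, Matrix.mulVec, dotProduct]
    refine mul_nonneg (mul_nonneg hα0.le (pow_nonneg hα1' ℓ)) ?_
    exact Finset.sum_nonneg fun t _ => mul_nonneg (hPpow_nn ℓ s t) (hx t)
  -- final algebra
  have hL : ∀ s t, d s ^ β * (d s ^ (1 - β) * πs s t * d t ^ (β - 1)) = d t ^ β * πs t s := by
    intro s t
    have h1 : d s ^ β * d s ^ (1 - β) = d s := by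
      rw [← Real.rpow_add (hd0 s)]
      norm_num
    have h2 : d t * d t ^ (β - 1) = d t ^ β := by
      nth_rewrite 1 [← Real.rpow_one (d t)]
      rw [← Real.rpow_add (hd0 t)]
      norm_num
    calc d s ^ β * (d s ^ (1 - β) * πs s t * d t ^ (β - 1))
        = (d s ^ β * d s ^ (1 - β)) * πs s t * d t ^ (β - 1) := by ring
      _ = (d s * πs s t) * d t ^ (β - 1) := by rw [h1]
      _ = (d t * πs t s) * d t ^ (β - 1) := by rw [hπsym s t]
      _ = (d t * d t ^ (β - 1)) * πs t s := by ring
      _ = d t ^ β * πs t s := by rw [h2]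
  have hR : ∀ s t, d s ^ β * (d s ^ (-β) * d t ^ β * r t * πs t s) = d t ^ β * r t * πs t s := by
    intro s t
    have h1 : d s ^ β * d s ^ (-β) = 1 := by
      rw [← Real.rpow_add (hd0 s), add_neg_cancel, Real.rpow_zero]
    calc d s ^ β * (d s ^ (-β) * d t ^ β * r t * πs t s)
        = (d s ^ β * d s ^ (-β)) * (d t ^ β * r t * πs t s) := by ring
      _ = d t ^ β * r t * πs t s := by rw [h1, one_mul]
  have hyT : (∑ t, (∑ s, d s ^ β * (d s ^ (1 - β) * πs s t * d t ^ (β - 1))) * r t) =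
      ∑ s, d s ^ β * y s := by
    calc ∑ t, (∑ s, d s ^ β * (d s ^ (1 - β) * πs s t * d t ^ (β - 1))) * r t
        = ∑ t, ∑ s, d t ^ β * r t * πs t s := by
          refine Finset.sum_congr rfl fun t _ => ?_
          rw [Finset.sum_mul]
          refine Finset.sum_congr rfl fun s _ => ?_
          rw [hL s t]; ring
      _ = ∑ s, ∑ t, d t ^ β * r t * πs t s := Finset.sum_comm
      _ = ∑ s, d s ^ β * y s := by
          refine Finset.sum_congr rfl fun s _ => ?_
          rw [hydef]
          simp only
          rw [Finset.mul_sum]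
          exact Finset.sum_congr rfl fun t _ => (hR s t).symm
  have main : ∑ s, d s ^ β * πh s = (∑ s, d s ^ β * |π s|) -
      ∑ t, (∑ s, d s ^ β * (d s ^ (1 - β) * πs s t * d t ^ (β - 1))) * r t := by
    have habs : ∀ s, d s ^ β * |π s| = d s ^ β * π s := fun s => by
      rw [abs_of_nonneg (hπ0 s)]
    simp only [habs]
    rw [hyT, heq]
    simp only [Pi.sub_apply, mul_sub]
    rw [Finset.sum_sub_distrib]
  rw [main]
end

section
/- Correctness of the edge-insertion update (Algorithm 2, InsertEdge): Suppose π̂, r, x ∈ ℝ^n satisfy the invariant π̂ + α·r = α·x + (1−α)·P·π̂. Let u ≠ v be nodes with A(u,v) = 0, and let G′ be obtained from G by inserting the undirected edge (u,v): A′ = A + e_u e_vᵀ + e_v e_uᵀ, with degrees d′(u) = d(u)+1, d′(v) = d(v)+1, d′(w) = d(w) for w ∉ {u,v}, and propagation matrix P′(s,t) = A′(s,t)/(d′(s)^β·d′(t)^{1−β}). Define Δr ∈ ℝ^n as the sum of the following contributions (a node receiving several contributions accumulates them): (i) at node u, the amount (1/α)·[ (π̂(u) + α·r(u) − α·x(u))·(d(u)^β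 − d′(u)^β)/d′(u)^β + (1−α)·π̂(v)/(d′(u)^β·d′(v)^{1−β}) ]; (ii) at node v, the amount (1/α)·[ (π̂(v) + α·r(v) − α·x(v))·(d(v)^β − d′(v)^β)/d′(v)^β + (1−α)·π̂(u)/(d′(v)^β·d′(u)^{1−β}) ]; (iii) at every node w with A(w,u) = 1, the amount (1−α)·π̂(u)/(α·d′(w)^β)·(1/d′(u)^{1−β} − 1/d(u)^{1−β}); (iv) at every node y with A(y,v) = 1, the amount (1−α)·π̂(v)/(α·d′(y)^β)·(1/d′(v)^{1−β} − 1/d(v)^{1−β}). Then the invariant holds for the updated graph with the same estimate: π̂ + α·(r + Δr) = α·x + (1−α)·P′·π̂. -/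
set_option maxHeartbeats 4000000 in
open Classical in
/-- Correctness of the edge-insertion update (Algorithm 2, InsertEdge):
after inserting the undirected edge (u,v) and adding the prescribed residual
increments `Δr`, the propagation invariant holds for the updated graph with
the same estimate vector. -/
theorem insert_edge_update_correct {n : ℕ} (hn : 1 ≤ n)
    (A : Matrix (Fin n) (Fin n) ℝ) (hA_symm : A.IsSymm)
    (hA01 : ∀ s t, A s t = 0 ∨ A s t = 1)
    (d : Fin n → ℝ) (hd : ∀ s, d s = ∑ t, A s t) (hd1 : ∀ s, 1 ≤ d s)
    (β : ℝ) (hβ0 : 0 ≤ β) (hβ1 : β ≤ 1)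
    (P : Matrix (Fin n) (Fin n) ℝ)
    (hP : ∀ s t, P s t = A s t / (d s ^ β * d t ^ (1 - β)))
    (α : ℝ) (hα0 : 0 < α) (hα1 : α < 1)
    (x πh r : Fin n → ℝ)
    (hinv : πh + α • r = α • x + (1 - α) • (P.mulVec πh))
    (u v : Fin n) (huv : u ≠ v) (hAuv : A u v = 0)
    (A' : Matrix (Fin n) (Fin n) ℝ)
    (hA' : A' = A + Matrix.single u v 1 + Matrix.single v u 1)
    (d' : Fin n → ℝ)
    (hd'u : d' u = d u + 1) (hd'v : d' v = d v + 1)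
    (hd'w : ∀ w, w ≠ u → w ≠ v → d' w = d w)
    (P' : Matrix (Fin n) (Fin n) ℝ)
    (hP' : ∀ s t, P' s t = A' s t / (d' s ^ β * d' t ^ (1 - β)))
    (Δr : Fin n → ℝ)
    (hΔr : ∀ t, Δr t =
      (if t = u then
        (1 / α) * ((πh u + α * r u - α * x u) * (d u ^ β - d' u ^ β) / d' u ^ β
          + (1 - α) * πh v / (d' u ^ β * d' v ^ (1 - β)))
       else 0)
      + (if t = v then
        (1 / α) * ((πh v + α * r v - α * x v) * (d v ^ β - d' v ^ β) / d' v ^ β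
          + (1 - α) * πh u / (d' v ^ β * d' u ^ (1 - β)))
       else 0)
      + (if A t u = 1 then
          (1 - α) * πh u / (α * d' t ^ β)
            * (1 / d' u ^ (1 - β) - 1 / d u ^ (1 - β))
         else 0)
      + (if A t v = 1 then
          (1 - α) * πh v / (α * d' t ^ β)
            * (1 / d' v ^ (1 - β) - 1 / d v ^ (1 - β))
         else 0)) :
    πh + α • (r + Δr) = α • x + (1 - α) • (P'.mulVec πh) := by
  have hα1' : (1:ℝ) - α ≠ 0 := by linarith
  have hd0 : ∀ s, (0:ℝ) < d s := fun s => lt_of_lt_of_le one_pos (hd1 s)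
  have hd'0 : ∀ s, (0:ℝ) < d' s := by
    intro s
    by_cases hsu : s = u
    · rw [hsu, hd'u]; linarith [hd0 u]
    by_cases hsv : s = v
    · rw [hsv, hd'v]; linarith [hd0 v]
    · rw [hd'w s hsu hsv]; exact hd0 s
  have hp : ∀ s (γ : ℝ), d s ^ γ ≠ 0 := fun s γ => (Real.rpow_pos_of_pos (hd0 s) γ).ne'
  have hp' : ∀ s (γ : ℝ), d' s ^ γ ≠ 0 := fun s γ => (Real.rpow_pos_of_pos (hd'0 s) γ).ne'
  have e1 : d u ^ β ≠ 0 := hp u β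
  have e2 : d u ^ (1-β) ≠ 0 := hp u (1-β)
  have e3 : d v ^ β ≠ 0 := hp v β
  have e4 : d v ^ (1-β) ≠ 0 := hp v (1-β)
  have e5 : d' u ^ β ≠ 0 := hp' u β
  have e6 : d' u ^ (1-β) ≠ 0 := hp' u (1-β)
  have e7 : d' v ^ β ≠ 0 := hp' v β
  have e8 : d' v ^ (1-β) ≠ 0 := hp' v (1-β)
  have hα0' : α ≠ 0 := hα0.ne'
  have hAvu : A v u = 0 := by
    have h := congrFun (congrFun hA_symm u) v
    simpa [Matrix.transpose_apply, hAuv] using h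
  have hA'tu : ∀ t, A' t u = A t u + (if t = v then 1 else 0) := by
    intro t
    rw [hA']
    by_cases htv : t = v
    · subst htv; simp [Matrix.single, Ne.symm huv]
    · simp [Matrix.single, htv, Ne.symm htv, Ne.symm huv]
  have hA'tv : ∀ t, A' t v = A t v + (if t = u then 1 else 0) := by
    intro t
    rw [hA']
    by_cases htu : t = u
    · subst htu; simp [Matrix.single, huv]
    · simp [Matrix.single, htu, Ne.symm htu, huv]
  have hsum : ∀ t, ∑ s, P' t s * πh s =
      (d t ^ β / d' t ^ β) * (∑ s, P t s * πh s)
      + A t u * πh u / d' t ^ β * (1 / d' u ^ (1 - β) - 1 / d u ^ (1 - β))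
      + A t v * πh v / d' t ^ β * (1 / d' v ^ (1 - β) - 1 / d v ^ (1 - β))
      + (if t = u then πh v / (d' u ^ β * d' v ^ (1 - β)) else 0)
      + (if t = v then πh u / (d' v ^ β * d' u ^ (1 - β)) else 0) := by
    intro t
    have key : ∑ s, (P' t s * πh s - (d t ^ β / d' t ^ β) * (P t s * πh s)) =
        (P' t u * πh u - (d t ^ β / d' t ^ β) * (P t u * πh u))
        + (P' t v * πh v - (d t ^ β / d' t ^ β) * (P t v * πh v)) := by
      rw [← Finset.sum_pair (f := fun s => P' t s * πh s - (d t ^ β / d' t ^ β) * (P t s * πh s)) huv]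
      refine (Finset.sum_subset (Finset.subset_univ _) ?_).symm
      intro s _ hs
      simp only [Finset.mem_insert, Finset.mem_singleton, not_or] at hs
      obtain ⟨hsu, hsv⟩ := hs
      have hA's : A' t s = A t s := by
        rw [hA']
        simp [Matrix.single, Ne.symm hsu, Ne.symm hsv]
      have k1 : d' t ^ β ≠ 0 := hp' t β
      have k2 : d t ^ β ≠ 0 := hp t β
      have k3 : d s ^ (1-β) ≠ 0 := hp s (1-β)
      rw [hP', hP, hA's, hd'w s hsu hsv]
      field_simp
      ring
    have expand : ∑ s, (P' t s * πh s - (d t ^ β / d' t ^ β) * (P t s * πh s)) =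
        (∑ s, P' t s * πh s) - (d t ^ β / d' t ^ β) * (∑ s, P t s * πh s) := by
      rw [Finset.sum_sub_distrib, Finset.mul_sum]
    rw [expand] at key
    have hgoal : (P' t u * πh u - (d t ^ β / d' t ^ β) * (P t u * πh u))
        + (P' t v * πh v - (d t ^ β / d' t ^ β) * (P t v * πh v)) =
        A t u * πh u / d' t ^ β * (1 / d' u ^ (1 - β) - 1 / d u ^ (1 - β))
        + A t v * πh v / d' t ^ β * (1 / d' v ^ (1 - β) - 1 / d v ^ (1 - β))
        + (if t = u then πh v / (d' u ^ β * d' v ^ (1 - β)) else 0)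
        + (if t = v then πh u / (d' v ^ β * d' u ^ (1 - β)) else 0) := by
      rw [hP', hP', hP, hP, hA'tu, hA'tv]
      by_cases htu : t = u
      · simp only [htu, if_pos rfl, if_neg huv, if_true, if_false, ite_true, ite_false]
        field_simp
        ring
      by_cases htv : t = v
      · simp only [htv, if_pos rfl, if_neg (Ne.symm huv), if_true, if_false, ite_true, ite_false]
        field_simp
        ring
      · simp only [if_neg htu, if_neg htv]
        rw [hd'w t htu htv]
        have k1 : d' t ^ β ≠ 0 := hp' t β
        have k2 : d t ^ β ≠ 0 := hp t β
        field_simp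
        ring
    linarith [key, hgoal]
  funext t
  have hinvt : πh t + α * r t = α * x t + (1 - α) * ∑ s, P t s * πh s := by
    have h := congrFun hinv t
    simpa [Matrix.mulVec, dotProduct] using h
  have hSval : ∑ s, P t s * πh s = (πh t + α * r t - α * x t) / (1 - α) := by
    rw [eq_div_iff hα1']
    linear_combination -hinvt
  show πh t + α * (r t + Δr t) = α * x t + (1 - α) * (P'.mulVec πh) t
  rw [show (P'.mulVec πh) t = ∑ s, P' t s * πh s from by
    simp [Matrix.mulVec, dotProduct]]
  rw [hsum t, hSval, hΔr t]
  by_cases htu : t = u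
  · simp only [htu, if_pos rfl, if_neg huv, hAuv, if_true, if_false, ite_true, ite_false]
    rcases hA01 u u with h0 | h1
    · simp only [h0, if_neg (by norm_num : ¬(0:ℝ) = 1)]
      field_simp
      ring
    · simp only [h1, if_pos rfl, eq_self_iff_true, if_true, if_neg (by norm_num : ¬(0:ℝ) = 1)]
      field_simp
      ring
  by_cases htv : t = v
  · simp only [htv, if_pos rfl, if_neg (Ne.symm huv), hAvu, if_true, if_false, ite_true, ite_false]
    rcases hA01 v v with h0 | h1
    · simp only [h0, if_neg (by norm_num : ¬(0:ℝ) = 1)]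
      field_simp
      ring
    · simp only [h1, if_pos rfl, eq_self_iff_true, if_true, if_neg (by norm_num : ¬(0:ℝ) = 1)]
      field_simp
      ring
  · simp only [if_neg htu, if_neg htv]
    rw [hd'w t htu htv]
    have k1 : d' t ^ β ≠ 0 := hp' t β
    have k2 : d t ^ β ≠ 0 := hp t β
    rcases hA01 t u with h0u | h1u <;> rcases hA01 t v with h0v | h1v
    · simp only [h0u, h0v, if_neg (by norm_num : ¬(0:ℝ) = 1)]
      field_simp
      ring
    · simp only [h0u, h1v, if_pos rfl, eq_self_iff_true, if_true, if_neg (by norm_num : ¬(0:ℝ) = 1)]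
      field_simp
      ring
    · simp only [h1u, h0v, if_pos rfl, eq_self_iff_true, if_true, if_neg (by norm_num : ¬(0:ℝ) = 1)]
      field_simp
      ring
    · simp only [h1u, h1v, if_pos rfl, eq_self_iff_true, if_true]
      field_simp
      ring
end

section
/- Correctness of the edge-deletion update (Algorithm 2, DeleteEdge): Suppose π̂, r, x ∈ ℝ^n satisfy the invariant π̂ + α·r = α·x + (1−α)·P·π̂. Let u ≠ v be nodes with A(u,v) = 1 and d(u) ≥ 2, d(v) ≥ 2, and let G′ be obtained from G by deleting the undirected edge (u,v): A′ = A − e_u e_vᵀ − e_v e_uᵀ, with degrees d′(u) = d(u)−1, d′(v) = d(v)−1, d′(w) = d(w) for w ∉ {u,v}, and propagation matrix P′(s,t) = A′(s,t)/(d′(s)^β·d′(t)^{1−β}). Define Δr ∈ ℝ^n as the sum of the following contributions (a node receiving several contributions accumulates them): (i) at node u, the amount (1/α)·[ (π̂(u) + α·r(u) − α·x(u))·(d(u)^β − d′(u)^β)/d′(u)^β − (1−α)·π̂(v)/(d′(u)^β·d′(v)^{1−β}) ]; (ii) at node v, the amount (1/α)·[ (π̂(v) + α·r(v) − α·x(v))·(d(v)^β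 − d′(v)^β)/d′(v)^β − (1−α)·π̂(u)/(d′(v)^β·d′(u)^{1−β}) ]; (iii) at every node w with A(w,u) = 1 (in the original graph G, including w = v and possible self-loops), the amount (1−α)·π̂(u)/(α·d′(w)^β)·(1/d′(u)^{1−β} − 1/d(u)^{1−β}); (iv) at every node y with A(y,v) = 1 (in G), the amount (1−α)·π̂(v)/(α·d′(y)^β)·(1/d′(v)^{1−β} − 1/d(v)^{1−β}). Then π̂ + α·(r + Δr) = α·x + (1−α)·P′·π̂. -/
set_option maxHeartbeats 2000000

open Classical in
/-- Correctness of the edge-deletion update (Algorithm 2, DeleteEdge):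
after deleting the undirected edge (u,v) and adding the prescribed residual
increments `Δr`, the propagation invariant holds for the updated graph with
the same estimate vector. -/
theorem delete_edge_update_correct {n : ℕ} (hn : 1 ≤ n)
    (A : Matrix (Fin n) (Fin n) ℝ) (hA_symm : A.IsSymm)
    (hA01 : ∀ s t, A s t = 0 ∨ A s t = 1)
    (d : Fin n → ℝ) (hd : ∀ s, d s = ∑ t, A s t) (hd1 : ∀ s, 1 ≤ d s)
    (β : ℝ) (hβ0 : 0 ≤ β) (hβ1 : β ≤ 1)
    (P : Matrix (Fin n) (Fin n) ℝ)
    (hP : ∀ s t, P s t = A s t / (d s ^ β * d t ^ (1 - β)))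
    (α : ℝ) (hα0 : 0 < α) (hα1 : α < 1)
    (x πh r : Fin n → ℝ)
    (hinv : πh + α • r = α • x + (1 - α) • (P.mulVec πh))
    (u v : Fin n) (huv : u ≠ v) (hAuv : A u v = 1)
    (hdu2 : 2 ≤ d u) (hdv2 : 2 ≤ d v)
    (A' : Matrix (Fin n) (Fin n) ℝ)
    (hA' : A' = A - Matrix.single u v 1 - Matrix.single v u 1)
    (d' : Fin n → ℝ)
    (hd'u : d' u = d u - 1) (hd'v : d' v = d v - 1)
    (hd'w : ∀ w, w ≠ u → w ≠ v → d' w = d w)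
    (P' : Matrix (Fin n) (Fin n) ℝ)
    (hP' : ∀ s t, P' s t = A' s t / (d' s ^ β * d' t ^ (1 - β)))
    (Δr : Fin n → ℝ)
    (hΔr : ∀ t, Δr t =
      (if t = u then
        (1 / α) * ((πh u + α * r u - α * x u) * (d u ^ β - d' u ^ β) / d' u ^ β
          - (1 - α) * πh v / (d' u ^ β * d' v ^ (1 - β)))
       else 0)
      + (if t = v then
        (1 / α) * ((πh v + α * r v - α * x v) * (d v ^ β - d' v ^ β) / d' v ^ β
          - (1 - α) * πh u / (d' v ^ β * d' u ^ (1 - β)))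
       else 0)
      + (if A t u = 1 then
          (1 - α) * πh u / (α * d' t ^ β)
            * (1 / d' u ^ (1 - β) - 1 / d u ^ (1 - β))
         else 0)
      + (if A t v = 1 then
          (1 - α) * πh v / (α * d' t ^ β)
            * (1 / d' v ^ (1 - β) - 1 / d v ^ (1 - β))
         else 0)) :
    πh + α • (r + Δr) = α • x + (1 - α) • (P'.mulVec πh) := by
  have hAvu : A v u = 1 := by rw [hA_symm.apply u v]; exact hAuv
  have huv' : v ≠ u := Ne.symm huv
  have hdpos : ∀ s, (0:ℝ) < d s := fun s => lt_of_lt_of_le one_pos (hd1 s)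
  have hd'pos : ∀ s, (0:ℝ) < d' s := by
    intro s
    by_cases hsu : s = u
    · subst hsu; rw [hd'u]; linarith
    by_cases hsv : s = v
    · subst hsv; rw [hd'v]; linarith
    · rw [hd'w s hsu hsv]; exact hdpos s
  have hp1 : ∀ s, d s ^ β ≠ 0 := fun s => (Real.rpow_pos_of_pos (hdpos s) β).ne'
  have hp2 : ∀ s, d s ^ (1-β) ≠ 0 := fun s => (Real.rpow_pos_of_pos (hdpos s) _).ne'
  have hq1 : ∀ s, d' s ^ β ≠ 0 := fun s => (Real.rpow_pos_of_pos (hd'pos s) β).ne'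
  have hq2 : ∀ s, d' s ^ (1-β) ≠ 0 := fun s => (Real.rpow_pos_of_pos (hd'pos s) _).ne'
  have hα : α ≠ 0 := ne_of_gt hα0
  have hinvp : ∀ t, πh t + α * r t = α * x t + (1-α) * ∑ s, P t s * πh s := by
    intro t
    have h := congrFun hinv t
    simpa [Matrix.mulVec, dotProduct] using h
  funext t
  simp only [Pi.add_apply, Pi.smul_apply, smul_eq_mul]
  have hmv : P'.mulVec πh t = ∑ s, P' t s * πh s := rfl
  rw [hmv]
  have key : α * Δr t = (1 - α) * ∑ s, (P' t s - P t s) * πh s := by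
    have h_u : πh u + α * r u - α * x u = (1-α) * ∑ s, P u s * πh s := by
      linarith [hinvp u]
    have h_v : πh v + α * r v - α * x v = (1-α) * ∑ s, P v s * πh s := by
      linarith [hinvp v]
    have hpt : ∀ s, (1-α) * ((P' t s - P t s) * πh s)
        = (if t = u then (1-α) * (P u s * πh s) * (d u ^ β - d' u ^ β) / d' u ^ β else 0)
        + (if t = v then (1-α) * (P v s * πh s) * (d v ^ β - d' v ^ β) / d' v ^ β else 0)
        + (if s = u then (if A t u = 1 then
            (1-α) * πh u / d' t ^ β * (1 / d' u ^ (1-β) - 1 / d u ^ (1-β)) else 0) else 0)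
        + (if s = v then (if A t v = 1 then
            (1-α) * πh v / d' t ^ β * (1 / d' v ^ (1-β) - 1 / d v ^ (1-β)) else 0) else 0)
        + (if s = v then (if t = u then
            -((1-α) * πh v / (d' u ^ β * d' v ^ (1-β))) else 0) else 0)
        + (if s = u then (if t = v then
            -((1-α) * πh u / (d' v ^ β * d' u ^ (1-β))) else 0) else 0) := by
      intro s
      have hA's : A' t s = A t s - (if u = t ∧ v = s then 1 else 0)
          - (if v = t ∧ u = s then 1 else 0) := by
        rw [hA']; simp [Matrix.single, Matrix.sub_apply]
      rw [hP' t s, hP t s, hP u s, hP v s, hA's]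
      by_cases htu : t = u
      · by_cases hsu : s = u
        · simp only [htu, hsu]
          rcases hA01 u u with h | h <;>
            simp [h, huv, huv', hAuv, -one_div] <;>
            field_simp [hq1 u, hq2 u, hp1 u, hp2 u] <;> try ring
          all_goals try (field_simp [hq1 u, hq2 u, hp1 u, hp2 u]; ring)
        · by_cases hsv : s = v
          · simp only [htu, hsv]
            simp [huv, huv', hAuv, -one_div]
            field_simp [hq1 u, hq2 u, hq1 v, hq2 v, hp1 u, hp2 u, hp1 v, hp2 v]
            try ring
            try (field_simp [hq1 u, hq2 u, hq1 v, hq2 v, hp1 u, hp2 u, hp1 v, hp2 v]; ring)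
          · have hs' : d' s = d s := hd'w s hsu hsv
            simp only [htu]
            simp [huv, huv', hsu, hsv, Ne.symm hsu, Ne.symm hsv, hs', -one_div]
            field_simp [hq1 u, hq2 u, hp1 u, hp2 u, hp1 s, hp2 s]
            try ring
            try (field_simp [hq1 u, hq2 u, hp1 u, hp2 u, hp1 s, hp2 s]; ring)
      · by_cases htv : t = v
        · by_cases hsv : s = v
          · simp only [htv, hsv]
            rcases hA01 v v with h | h <;>
              simp [h, huv, huv', hAvu, -one_div] <;>
              field_simp [hq1 v, hq2 v, hp1 v, hp2 v] <;> try ring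
            all_goals try (field_simp [hq1 v, hq2 v, hp1 v, hp2 v]; ring)
          · by_cases hsu : s = u
            · simp only [htv, hsu]
              simp [huv, huv', hAvu, -one_div]
              field_simp [hq1 u, hq2 u, hq1 v, hq2 v, hp1 u, hp2 u, hp1 v, hp2 v]
              try ring
              try (field_simp [hq1 u, hq2 u, hq1 v, hq2 v, hp1 u, hp2 u, hp1 v, hp2 v]; ring)
            · have hs' : d' s = d s := hd'w s hsu hsv
              simp only [htv]
              simp [huv, huv', hsu, hsv, Ne.symm hsu, Ne.symm hsv, hs', -one_div]
              field_simp [hq1 v, hq2 v, hp1 v, hp2 v, hp1 s, hp2 s]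
              try ring
              try (field_simp [hq1 v, hq2 v, hp1 v, hp2 v, hp1 s, hp2 s]; ring)
        · have ht' : d' t = d t := hd'w t htu htv
          have htu' : u ≠ t := Ne.symm htu
          have htv' : v ≠ t := Ne.symm htv
          by_cases hsu : s = u
          · simp only [hsu]
            rcases hA01 t u with h | h <;>
              simp [h, htu, htv, htu', htv', huv, huv', ht', -one_div] <;>
              field_simp [hq1 u, hq2 u, hp1 u, hp2 u, hp1 t, hp2 t] <;> try ring
            all_goals try (field_simp [hq1 u, hq2 u, hp1 u, hp2 u, hp1 t, hp2 t]; ring)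
          · by_cases hsv : s = v
            · simp only [hsv]
              rcases hA01 t v with h | h <;>
                simp [h, htu, htv, htu', htv', huv, huv', ht', -one_div] <;>
                field_simp [hq1 v, hq2 v, hp1 v, hp2 v, hp1 t, hp2 t] <;> try ring
              all_goals try (field_simp [hq1 v, hq2 v, hp1 v, hp2 v, hp1 t, hp2 t]; ring)
            · have hs' : d' s = d s := hd'w s hsu hsv
              simp [htu, htv, htu', htv', hsu, hsv, Ne.symm hsu, Ne.symm hsv, ht', hs']
    have e1 : (∑ s, if t = u then
          (1-α) * (P u s * πh s) * (d u ^ β - d' u ^ β) / d' u ^ β else 0)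
        = (if t = u then
          (1-α) * (∑ s, P u s * πh s) * (d u ^ β - d' u ^ β) / d' u ^ β else 0) := by
      by_cases htu : t = u
      · simp only [if_pos htu]
        rw [← Finset.sum_div, ← Finset.sum_mul, ← Finset.mul_sum]
      · simp [htu]
    have e2 : (∑ s, if t = v then
          (1-α) * (P v s * πh s) * (d v ^ β - d' v ^ β) / d' v ^ β else 0)
        = (if t = v then
          (1-α) * (∑ s, P v s * πh s) * (d v ^ β - d' v ^ β) / d' v ^ β else 0) := by
      by_cases htv : t = v
      · simp only [if_pos htv]
        rw [← Finset.sum_div, ← Finset.sum_mul, ← Finset.mul_sum]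
      · simp [htv]
    have hsum : (∑ s, (1-α) * ((P' t s - P t s) * πh s))
        = (if t = u then
            (1-α) * (∑ s, P u s * πh s) * (d u ^ β - d' u ^ β) / d' u ^ β else 0)
        + (if t = v then
            (1-α) * (∑ s, P v s * πh s) * (d v ^ β - d' v ^ β) / d' v ^ β else 0)
        + (if A t u = 1 then
            (1-α) * πh u / d' t ^ β * (1 / d' u ^ (1-β) - 1 / d u ^ (1-β)) else 0)
        + (if A t v = 1 then
            (1-α) * πh v / d' t ^ β * (1 / d' v ^ (1-β) - 1 / d v ^ (1-β)) else 0)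
        + (if t = u then -((1-α) * πh v / (d' u ^ β * d' v ^ (1-β))) else 0)
        + (if t = v then -((1-α) * πh u / (d' v ^ β * d' u ^ (1-β))) else 0) := by
      rw [Finset.sum_congr rfl (fun s _ => hpt s)]
      rw [Finset.sum_add_distrib, Finset.sum_add_distrib, Finset.sum_add_distrib,
        Finset.sum_add_distrib, Finset.sum_add_distrib, e1, e2]
      simp only [Finset.sum_ite_eq', Finset.mem_univ, if_true]
    rw [Finset.mul_sum, hsum, hΔr t, h_u, h_v, mul_add, mul_add, mul_add]
    have c1 : α * (if t = u then
          1 / α * ((1 - α) * (∑ s, P u s * πh s) * (d u ^ β - d' u ^ β) / d' u ^ β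
            - (1 - α) * πh v / (d' u ^ β * d' v ^ (1 - β))) else 0)
        = (if t = u then
            (1-α) * (∑ s, P u s * πh s) * (d u ^ β - d' u ^ β) / d' u ^ β else 0)
          + (if t = u then
            -((1-α) * πh v / (d' u ^ β * d' v ^ (1 - β))) else 0) := by
      split_ifs with h
      · rw [← mul_assoc, mul_one_div_cancel hα, one_mul, sub_eq_add_neg]
      · simp
    have c2 : α * (if t = v then
          1 / α * ((1 - α) * (∑ s, P v s * πh s) * (d v ^ β - d' v ^ β) / d' v ^ β
            - (1 - α) * πh u / (d' v ^ β * d' u ^ (1 - β))) else 0)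
        = (if t = v then
            (1-α) * (∑ s, P v s * πh s) * (d v ^ β - d' v ^ β) / d' v ^ β else 0)
          + (if t = v then
            -((1-α) * πh u / (d' v ^ β * d' u ^ (1 - β))) else 0) := by
      split_ifs with h
      · rw [← mul_assoc, mul_one_div_cancel hα, one_mul, sub_eq_add_neg]
      · simp
    have c3 : α * (if A t u = 1 then
          (1 - α) * πh u / (α * d' t ^ β) * (1 / d' u ^ (1 - β) - 1 / d u ^ (1 - β)) else 0)
        = (if A t u = 1 then
            (1-α) * πh u / d' t ^ β * (1 / d' u ^ (1-β) - 1 / d u ^ (1-β)) else 0) := by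
      split_ifs with h
      · rw [div_mul_eq_mul_div, div_mul_eq_mul_div, ← mul_div_assoc]
        exact mul_div_mul_left _ _ hα
      · simp
    have c4 : α * (if A t v = 1 then
          (1 - α) * πh v / (α * d' t ^ β) * (1 / d' v ^ (1 - β) - 1 / d v ^ (1 - β)) else 0)
        = (if A t v = 1 then
            (1-α) * πh v / d' t ^ β * (1 / d' v ^ (1-β) - 1 / d v ^ (1-β)) else 0) := by
      split_ifs with h
      · rw [div_mul_eq_mul_div, div_mul_eq_mul_div, ← mul_div_assoc]
        exact mul_div_mul_left _ _ hα
      · simp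
    rw [c1, c2, c3, c4]
    ring
  calc πh t + α * (r t + Δr t) = (πh t + α * r t) + α * Δr t := by ring
    _ = (α * x t + (1-α) * ∑ s, P t s * πh s)
        + (1 - α) * ∑ s, (P' t s - P t s) * πh s := by rw [hinvp t, key]
    _ = α * x t + (1 - α) * ∑ s, P' t s * πh s := by
        rw [show (∑ s, (P' t s - P t s) * πh s)
            = (∑ s, P' t s * πh s) - ∑ s, P t s * πh s by
          rw [← Finset.sum_sub_distrib]; exact Finset.sum_congr rfl (fun s _ => by ring)]
        ring
end

section
/- Spectrum of the propagation matrix: Suppose in addition that every node of G has a self-loop, i.e. A(s,s) = 1 for every s ∈ V. Then every complex eigenvalue of P = D^{−β} A D^{β−1} is real and lies in the half-open interval (−1, 1]; consequently, for every α ∈ (0,1), every eigenvalue of I − (1−α)P lies in the interval [α, 2−α), and in particular I − (1−α)P is invertible. -/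
open Matrix Complex Finset

lemma alg_mulVec {n : ℕ} (μ : ℂ) (v : Fin n → ℂ) :
    (algebraMap ℂ (Matrix (Fin n) (Fin n) ℂ) μ).mulVec v = μ • v := by
  rw [Matrix.algebraMap_eq_diagonal]
  ext s
  simp [Matrix.mulVec_diagonal]

lemma spec_iff_eig {n : ℕ} (M : Matrix (Fin n) (Fin n) ℂ) (μ : ℂ) :
    μ ∈ spectrum ℂ M ↔ ∃ v : Fin n → ℂ, v ≠ 0 ∧ M.mulVec v = μ • v := by
  rw [spectrum.mem_iff, Matrix.isUnit_iff_isUnit_det, isUnit_iff_ne_zero, not_not,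
    ← Matrix.exists_mulVec_eq_zero_iff]
  constructor
  · rintro ⟨v, hv, hmv⟩
    refine ⟨v, hv, ?_⟩
    rw [Matrix.sub_mulVec, alg_mulVec, sub_eq_zero] at hmv
    exact hmv.symm
  · rintro ⟨v, hv, hmv⟩
    exact ⟨v, hv, by rw [Matrix.sub_mulVec, alg_mulVec, hmv, sub_self]⟩

lemma quad_bound {n : ℕ} (A : Matrix (Fin n) (Fin n) ℝ) (hA_symm : A.IsSymm)
    (hA0 : ∀ s t, 0 ≤ A s t) (hloop : ∀ s, A s s = 1)
    (d : Fin n → ℝ) (hd : ∀ s, d s = ∑ t, A s t) (hd1 : ∀ s, 1 ≤ d s)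
    (c : ℝ) (z : Fin n → ℝ) (hz : z ≠ 0)
    (heig : ∀ s, ∑ t, A s t * z t = c * (d s * z s)) :
    -1 < c ∧ c ≤ 1 := by
  set N : ℝ := ∑ s, d s * z s ^ 2 with hN
  have hS1 : ∑ s, ∑ t, A s t * z s ^ 2 = N := by
    refine Finset.sum_congr rfl fun s _ => ?_
    rw [← Finset.sum_mul, ← hd]
  have hS2 : ∑ s, ∑ t, A s t * z t ^ 2 = N := by
    rw [Finset.sum_comm]
    refine Finset.sum_congr rfl fun t _ => ?_
    rw [← Finset.sum_mul, hd]
    congr 1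
    exact Finset.sum_congr rfl fun s _ => (hA_symm.apply s t).symm
  have hE : ∑ s, ∑ t, A s t * z s * z t = c * N := by
    rw [hN, Finset.mul_sum]
    refine Finset.sum_congr rfl fun s _ => ?_
    have : ∑ t, A s t * z s * z t = z s * ∑ t, A s t * z t := by
      rw [Finset.mul_sum]; exact Finset.sum_congr rfl fun t _ => by ring
    rw [this, heig s]; ring
  have hzpos : 0 < ∑ s, z s ^ 2 := by
    obtain ⟨s, hs⟩ := Function.ne_iff.mp hz
    exact Finset.sum_pos' (fun t _ => sq_nonneg _)
      ⟨s, Finset.mem_univ s, lt_of_le_of_ne (sq_nonneg _) (Ne.symm (pow_ne_zero 2 hs))⟩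
  have hNpos : 0 < N := by
    refine lt_of_lt_of_le hzpos (Finset.sum_le_sum fun s _ => ?_)
    nlinarith [sq_nonneg (z s), hd1 s]
  constructor
  · have hexp : ∑ s, ∑ t, A s t * (z s + z t) ^ 2
        = (∑ s, ∑ t, A s t * z s ^ 2) + (∑ s, ∑ t, A s t * z t ^ 2)
          + 2 * ∑ s, ∑ t, A s t * z s * z t := by
      rw [Finset.mul_sum, ← Finset.sum_add_distrib, ← Finset.sum_add_distrib]
      refine Finset.sum_congr rfl fun s _ => ?_
      rw [Finset.mul_sum, ← Finset.sum_add_distrib, ← Finset.sum_add_distrib]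
      exact Finset.sum_congr rfl fun t _ => by ring
    rw [hS1, hS2, hE] at hexp
    have hdiag : 4 * ∑ s, z s ^ 2 ≤ ∑ s, ∑ t, A s t * (z s + z t) ^ 2 := by
      rw [Finset.mul_sum]
      refine Finset.sum_le_sum fun s _ => ?_
      have h1 : A s s * (z s + z s) ^ 2 ≤ ∑ t, A s t * (z s + z t) ^ 2 :=
        Finset.single_le_sum (f := fun t => A s t * (z s + z t) ^ 2)
          (fun t _ => mul_nonneg (hA0 s t) (sq_nonneg _)) (Finset.mem_univ s)
      rw [hloop s] at h1
      nlinarith [h1]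
    rw [hexp] at hdiag
    nlinarith [hzpos, hNpos]
  · have hexp : ∑ s, ∑ t, A s t * (z s - z t) ^ 2
        = (∑ s, ∑ t, A s t * z s ^ 2) + (∑ s, ∑ t, A s t * z t ^ 2)
          - 2 * ∑ s, ∑ t, A s t * z s * z t := by
      rw [Finset.mul_sum, ← Finset.sum_add_distrib, ← Finset.sum_sub_distrib]
      refine Finset.sum_congr rfl fun s _ => ?_
      rw [Finset.mul_sum, ← Finset.sum_add_distrib, ← Finset.sum_sub_distrib]
      exact Finset.sum_congr rfl fun t _ => by ring
    rw [hS1, hS2, hE] at hexp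
    have hnn : 0 ≤ ∑ s, ∑ t, A s t * (z s - z t) ^ 2 :=
      Finset.sum_nonneg fun s _ => Finset.sum_nonneg fun t _ =>
        mul_nonneg (hA0 s t) (sq_nonneg _)
    rw [hexp] at hnn
    nlinarith [hNpos]

lemma P_spec_bound {n : ℕ}
    (A : Matrix (Fin n) (Fin n) ℝ) (hA_symm : A.IsSymm)
    (hA01 : ∀ s t, A s t = 0 ∨ A s t = 1)
    (hloop : ∀ s, A s s = 1)
    (d : Fin n → ℝ) (hd : ∀ s, d s = ∑ t, A s t) (hd1 : ∀ s, 1 ≤ d s)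
    (β : ℝ)
    (P : Matrix (Fin n) (Fin n) ℝ)
    (hP : ∀ s t, P s t = A s t / (d s ^ β * d t ^ (1 - β))) :
    ∀ μ : ℂ, μ ∈ spectrum ℂ (P.map (Complex.ofReal)) →
      μ.im = 0 ∧ -1 < μ.re ∧ μ.re ≤ 1 := by
  intro μ hμ
  have hA0 : ∀ s t, 0 ≤ A s t := fun s t => by rcases hA01 s t with h | h <;> simp [h]
  have hdpos : ∀ s, 0 < d s := fun s => lt_of_lt_of_le one_pos (hd1 s)
  obtain ⟨v, hv, hmv⟩ := (spec_iff_eig _ μ).mp hμ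
  -- eigen-equation componentwise
  have heigC : ∀ s, ∑ t, ((P s t : ℝ) : ℂ) * v t = μ * v s := by
    intro s
    have := congrFun hmv s
    simpa [Matrix.mulVec, dotProduct, Matrix.map_apply] using this
  set y : Fin n → ℂ := fun t => ((d t ^ (β - 1) : ℝ) : ℂ) * v t with hy
  have hcoef : ∀ t, ((d t ^ (β - 1) : ℝ) : ℂ) ≠ 0 := fun t => by
    exact_mod_cast (Real.rpow_pos_of_pos (hdpos t) _).ne'
  have hy0 : y ≠ 0 := by
    intro h0
    apply hv
    funext t
    have := congrFun h0 t
    simp only [hy, Pi.zero_apply] at this ⊢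
    exact (mul_eq_zero.mp this).resolve_left (hcoef t)
  have hkey : ∀ s t, A s t * d t ^ (β - 1) = d s ^ β * P s t := by
    intro s t
    rw [hP]
    have h1 : d t ^ (β - 1) = (d t ^ (1 - β))⁻¹ := by
      rw [← Real.rpow_neg (hdpos t).le, neg_sub]
    have h2 : d s ^ β ≠ 0 := (Real.rpow_pos_of_pos (hdpos s) _).ne'
    have h3 : d t ^ (1 - β) ≠ 0 := (Real.rpow_pos_of_pos (hdpos t) _).ne'
    field_simp [h1]
    rw [mul_assoc, ← Real.rpow_add (hdpos t), show (β - 1 + (1 - β)) = (0:ℝ) by ring,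
      Real.rpow_zero, mul_one]
  have hds : ∀ s, d s * d s ^ (β - 1) = d s ^ β := by
    intro s
    have h := (Real.rpow_add (hdpos s) 1 (β - 1)).symm
    rw [Real.rpow_one] at h
    rw [h]
    norm_num
  have hstar : ∀ s, ∑ t, ((A s t : ℝ) : ℂ) * y t = μ * (((d s : ℝ) : ℂ) * y s) := by
    intro s
    calc ∑ t, ((A s t : ℝ) : ℂ) * y t
        = ∑ t, ((d s ^ β : ℝ) : ℂ) * (((P s t : ℝ) : ℂ) * v t) := by
          refine Finset.sum_congr rfl fun t _ => ?_
          rw [hy]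
          push_cast
          rw [← mul_assoc, ← Complex.ofReal_mul, hkey s t, Complex.ofReal_mul, mul_assoc]
      _ = ((d s ^ β : ℝ) : ℂ) * (μ * v s) := by rw [← Finset.mul_sum, heigC s]
      _ = μ * (((d s : ℝ) : ℂ) * y s) := by
          rw [hy]
          rw [show (((d s : ℝ) : ℂ) * (((d s ^ (β - 1) : ℝ) : ℂ) * v s))
              = ((d s * d s ^ (β - 1) : ℝ) : ℂ) * v s by push_cast; ring, hds s]
          ring
  -- quadratic form
  set N : ℝ := ∑ s, d s * Complex.normSq (y s) with hN
  have hNpos : 0 < N := by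
    obtain ⟨s, hs⟩ := Function.ne_iff.mp hy0
    refine Finset.sum_pos' (fun t _ => mul_nonneg (hdpos t).le (Complex.normSq_nonneg _)) ?_
    exact ⟨s, Finset.mem_univ s,
      mul_pos (hdpos s) (by simpa [Complex.normSq_pos] using hs)⟩
  set E : ℂ := ∑ s, ∑ t, ((A s t : ℝ) : ℂ) * (starRingEnd ℂ (y s) * y t) with hEdef
  have hE : E = μ * (N : ℂ) := by
    rw [hEdef, hN]
    push_cast
    rw [Finset.mul_sum]
    refine Finset.sum_congr rfl fun s _ => ?_
    have h1 : ∑ t, ((A s t : ℝ) : ℂ) * (starRingEnd ℂ (y s) * y t)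
        = starRingEnd ℂ (y s) * ∑ t, ((A s t : ℝ) : ℂ) * y t := by
      rw [Finset.mul_sum]
      exact Finset.sum_congr rfl fun t _ => by ring
    rw [h1, hstar s]
    have h2 : starRingEnd ℂ (y s) * y s = ((Complex.normSq (y s) : ℝ) : ℂ) := by
      rw [mul_comm, Complex.mul_conj]
    push_cast at h2 ⊢
    rw [show starRingEnd ℂ (y s) * (μ * ((d s : ℂ) * y s))
        = μ * ((d s : ℂ) * (starRingEnd ℂ (y s) * y s)) by ring, h2]
  have hconjE : starRingEnd ℂ E = E := by
    have h1 : starRingEnd ℂ E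
        = ∑ s, ∑ t, ((A s t : ℝ) : ℂ) * (y s * starRingEnd ℂ (y t)) := by
      rw [hEdef, _root_.map_sum]
      refine Finset.sum_congr rfl fun s _ => ?_
      rw [_root_.map_sum]
      refine Finset.sum_congr rfl fun t _ => ?_
      simp only [_root_.map_mul, Complex.conj_ofReal, RingHomCompTriple.comp_apply,
        Complex.conj_conj, RingHom.id_apply]
    rw [h1, hEdef, Finset.sum_comm]
    refine Finset.sum_congr rfl fun s _ => ?_
    refine Finset.sum_congr rfl fun t _ => ?_
    rw [hA_symm.apply s t]
    ring
  have hNne : ((N : ℝ) : ℂ) ≠ 0 := by exact_mod_cast hNpos.ne'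
  have him : μ.im = 0 := by
    have hceq : starRingEnd ℂ μ * ((N : ℝ) : ℂ) = μ * ((N : ℝ) : ℂ) := by
      have := hconjE
      rw [hE, _root_.map_mul, Complex.conj_ofReal] at this
      exact this
    have : starRingEnd ℂ μ = μ := mul_right_cancel₀ hNne hceq
    exact Complex.conj_eq_iff_im.mp this
  refine ⟨him, ?_⟩
  -- pass to a real eigenvector
  have hmu : μ = ((μ.re : ℝ) : ℂ) := Complex.ext rfl (by simp [him])
  have hre : ∀ s, ∑ t, A s t * (y t).re = μ.re * (d s * (y s).re) := by
    intro s
    have h := congrArg Complex.re (hstar s)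
    rw [hmu] at h
    simpa [Complex.re_sum, Complex.re_ofReal_mul] using h
  have him2 : ∀ s, ∑ t, A s t * (y t).im = μ.re * (d s * (y s).im) := by
    intro s
    have h := congrArg Complex.im (hstar s)
    rw [hmu] at h
    simpa [Complex.im_sum, Complex.im_ofReal_mul] using h
  by_cases hzr : (fun t => (y t).re) = 0
  · have hzi : (fun t => (y t).im) ≠ 0 := by
      intro hzi
      apply hy0
      funext t
      have h1 := congrFun hzr t
      have h2 := congrFun hzi t
      simp only [Pi.zero_apply] at h1 h2 ⊢
      exact Complex.ext h1 h2
    exact quad_bound A hA_symm hA0 hloop d hd hd1 μ.re _ hzi him2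
  · exact quad_bound A hA_symm hA0 hloop d hd hd1 μ.re _ hzr hre

/-- Spectrum of the propagation matrix: if every node has a self-loop, every
complex eigenvalue of `P = D^{−β} A D^{β−1}` is real and lies in `(−1, 1]`;
consequently every eigenvalue of `I − (1−α)P` lies in `[α, 2−α)`, and in
particular `I − (1−α)P` is invertible. -/
theorem propagation_matrix_spectrum {n : ℕ} (hn : 1 ≤ n)
    (A : Matrix (Fin n) (Fin n) ℝ) (hA_symm : A.IsSymm)
    (hA01 : ∀ s t, A s t = 0 ∨ A s t = 1)
    (hloop : ∀ s, A s s = 1)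
    (d : Fin n → ℝ) (hd : ∀ s, d s = ∑ t, A s t) (hd1 : ∀ s, 1 ≤ d s)
    (β : ℝ) (hβ0 : 0 ≤ β) (hβ1 : β ≤ 1)
    (P : Matrix (Fin n) (Fin n) ℝ)
    (hP : ∀ s t, P s t = A s t / (d s ^ β * d t ^ (1 - β))) :
    (∀ μ : ℂ, μ ∈ spectrum ℂ (P.map (Complex.ofReal)) →
      μ.im = 0 ∧ -1 < μ.re ∧ μ.re ≤ 1) ∧
    ∀ α : ℝ, 0 < α → α < 1 →
      (∀ μ : ℂ, μ ∈ spectrum ℂ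
          (((1 : Matrix (Fin n) (Fin n) ℝ) - (1 - α) • P).map (Complex.ofReal)) →
        μ.im = 0 ∧ α ≤ μ.re ∧ μ.re < 2 - α) ∧
      IsUnit ((1 : Matrix (Fin n) (Fin n) ℝ) - (1 - α) • P) := by
  have hPbound := P_spec_bound A hA_symm hA01 hloop d hd hd1 β P hP
  refine ⟨hPbound, ?_⟩
  intro α hα0 hα1
  set c : ℂ := ((1 - α : ℝ) : ℂ) with hc
  have hcne : c ≠ 0 := by
    rw [hc]
    exact_mod_cast (by linarith : (1 : ℝ) - α ≠ 0)
  set M : Matrix (Fin n) (Fin n) ℝ := (1 : Matrix (Fin n) (Fin n) ℝ) - (1 - α) • P with hM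
  set Pc : Matrix (Fin n) (Fin n) ℂ := P.map Complex.ofReal with hPc
  have hmap : M.map Complex.ofReal = (1 : Matrix (Fin n) (Fin n) ℂ) - c • Pc := by
    ext s t
    simp only [hM, hPc, hc, Matrix.map_apply, Matrix.sub_apply, Matrix.smul_apply,
      Matrix.one_apply, smul_eq_mul]
    push_cast
    split <;> simp
  have hspec : ∀ μ : ℂ, μ ∈ spectrum ℂ (M.map Complex.ofReal) →
      μ.im = 0 ∧ α ≤ μ.re ∧ μ.re < 2 - α := by
    intro μ hμ
    rw [hmap] at hμ
    obtain ⟨v, hv, hmv⟩ := (spec_iff_eig _ μ).mp hμ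
    have heig2 : Pc.mulVec v = ((1 - μ) / c) • v := by
      funext s
      have h := congrFun hmv s
      simp only [Matrix.sub_mulVec, Matrix.smul_mulVec, Matrix.one_mulVec,
        Pi.sub_apply, Pi.smul_apply, smul_eq_mul] at h
      simp only [Pi.smul_apply, smul_eq_mul]
      field_simp
      linear_combination -h
    have hlam : (1 - μ) / c ∈ spectrum ℂ Pc := (spec_iff_eig _ _).mpr ⟨v, hv, heig2⟩
    obtain ⟨him, hlo, hhi⟩ := hPbound _ hlam
    set lr : ℝ := ((1 - μ) / c).re with hlr
    have hlreq : (1 - μ) / c = ((lr : ℝ) : ℂ) := Complex.ext rfl (by simp [him])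
    have hμeq : μ = 1 - c * ((lr : ℝ) : ℂ) := by
      have : (1 - μ) = c * ((lr : ℝ) : ℂ) := by
        rw [← hlreq]
        field_simp
      linear_combination -this
    have hμeq2 : μ = ((1 - (1 - α) * lr : ℝ) : ℂ) := by
      rw [hμeq, hc]; push_cast; ring
    have hμre : μ.re = 1 - (1 - α) * lr := by rw [hμeq2, Complex.ofReal_re]
    have hμim : μ.im = 0 := by rw [hμeq2, Complex.ofReal_im]
    refine ⟨hμim, ?_, ?_⟩
    · rw [hμre]; nlinarith
    · rw [hμre]; nlinarith
  refine ⟨hspec, ?_⟩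
  by_contra hunit
  rw [Matrix.isUnit_iff_isUnit_det, isUnit_iff_ne_zero, not_not] at hunit
  have hdet : (M.map Complex.ofReal).det = 0 := by
    have h := (Complex.ofRealHom.map_det M).symm
    rw [show Complex.ofRealHom.mapMatrix M = M.map Complex.ofReal from rfl] at h
    rw [h, hunit]
    simp
  have h0 : (0 : ℂ) ∈ spectrum ℂ (M.map Complex.ofReal) := by
    rw [spectrum.mem_iff]
    intro hu
    rw [map_zero, zero_sub, IsUnit.neg_iff, Matrix.isUnit_iff_isUnit_det, hdet] at hu
    exact (isUnit_iff_ne_zero.mp hu) rfl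
  obtain ⟨_, h1, _⟩ := hspec 0 h0
  simp at h1
  linarith
end

section
/- Proposition 2 (PPR degree reversibility on undirected graphs): For all nodes s, t ∈ V, d(s)·π_s(t) = d(t)·π_t(s). -/
/-- Proposition 2 (PPR degree reversibility on undirected graphs):
`d(s)·π_s(t) = d(t)·π_t(s)` for all nodes `s, t`. -/
theorem ppr_degree_reversibility {n : ℕ} (hn : 1 ≤ n)
    (A : Matrix (Fin n) (Fin n) ℝ) (hA_symm : A.IsSymm)
    (hA01 : ∀ s t, A s t = 0 ∨ A s t = 1)
    (d : Fin n → ℝ) (hd : ∀ s, d s = ∑ t, A s t) (hd1 : ∀ s, 1 ≤ d s)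
    (α : ℝ) (hα0 : 0 < α) (hα1 : α < 1)
    (πs : Fin n → Fin n → ℝ)
    (hppr : ∀ s, HasSum (fun ℓ : ℕ => (α * (1 - α) ^ ℓ) •
      (((A * Matrix.diagonal fun t => (d t)⁻¹) ^ ℓ).mulVec
        (Pi.single s 1 : Fin n → ℝ))) (πs s)) :
    ∀ s t : Fin n, d s * πs s t = d t * πs t s := by
  have hdne : ∀ s, d s ≠ 0 := fun s => by
    have := hd1 s; linarith
  set Dinv : Matrix (Fin n) (Fin n) ℝ := Matrix.diagonal fun t => (d t)⁻¹ with hDinv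
  set D : Matrix (Fin n) (Fin n) ℝ := Matrix.diagonal d with hD
  have hDinvD : Dinv * D = 1 := by
    rw [hDinv, hD, Matrix.diagonal_mul_diagonal]
    have : (fun i => (d i)⁻¹ * d i) = fun _ : Fin n => (1 : ℝ) :=
      funext fun i => inv_mul_cancel₀ (hdne i)
    rw [this, Matrix.diagonal_one]
  have hDDinv : D * Dinv = 1 := by
    rw [hDinv, hD, Matrix.diagonal_mul_diagonal]
    have : (fun i => d i * (d i)⁻¹) = fun _ : Fin n => (1 : ℝ) :=
      funext fun i => mul_inv_cancel₀ (hdne i)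
    rw [this, Matrix.diagonal_one]
  have hkey : ∀ ℓ : ℕ, (A * Dinv) ^ ℓ * D = D * (Dinv * A) ^ ℓ := by
    intro ℓ
    induction ℓ with
    | zero => simp
    | succ k ih =>
      rw [pow_succ', mul_assoc, ih, ← mul_assoc, mul_assoc A Dinv D, hDinvD, mul_one,
        pow_succ' (Dinv * A), ← mul_assoc D, ← mul_assoc D Dinv A, hDDinv, one_mul]
  have hT : ∀ ℓ : ℕ, ((A * Dinv) ^ ℓ).transpose = (Dinv * A) ^ ℓ := by
    intro ℓ
    rw [Matrix.transpose_pow, Matrix.transpose_mul, hDinv,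
      Matrix.diagonal_transpose, hA_symm.eq]
  have hentry : ∀ (ℓ : ℕ) (s t : Fin n),
      ((A * Dinv) ^ ℓ) t s * d s = d t * ((A * Dinv) ^ ℓ) s t := by
    intro ℓ s t
    have h1 : ((A * Dinv) ^ ℓ * D) t s = (D * (Dinv * A) ^ ℓ) t s := by rw [hkey ℓ]
    rw [Matrix.mul_diagonal, Matrix.diagonal_mul] at h1
    rw [h1, ← hT ℓ, Matrix.transpose_apply]
  intro s t
  have hsum1 : HasSum (fun ℓ : ℕ =>
      d s * ((α * (1 - α) ^ ℓ) * (((A * Dinv) ^ ℓ).mulVec (Pi.single s 1)) t))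
      (d s * πs s t) := by
    have := (Pi.hasSum.mp (hppr s)) t
    simpa [smul_eq_mul, mul_assoc] using this.mul_left (d s)
  have hsum2 : HasSum (fun ℓ : ℕ =>
      d t * ((α * (1 - α) ^ ℓ) * (((A * Dinv) ^ ℓ).mulVec (Pi.single t 1)) s))
      (d t * πs t s) := by
    have := (Pi.hasSum.mp (hppr t)) s
    simpa [smul_eq_mul, mul_assoc] using this.mul_left (d t)
  have heq : (fun ℓ : ℕ =>
      d s * ((α * (1 - α) ^ ℓ) * (((A * Dinv) ^ ℓ).mulVec (Pi.single s 1)) t)) =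
      fun ℓ : ℕ =>
      d t * ((α * (1 - α) ^ ℓ) * (((A * Dinv) ^ ℓ).mulVec (Pi.single t 1)) s) := by
    funext ℓ
    have hms : (((A * Dinv) ^ ℓ).mulVec (Pi.single s 1)) t = ((A * Dinv) ^ ℓ) t s := by
      simp [Matrix.mulVec_single]
    have hmt : (((A * Dinv) ^ ℓ).mulVec (Pi.single t 1)) s = ((A * Dinv) ^ ℓ) s t := by
      simp [Matrix.mulVec_single]
    rw [hms, hmt]
    linear_combination (α * (1 - α) ^ ℓ) * hentry ℓ s t
  rw [heq] at hsum1
  exact hsum1.unique hsum2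
end

section
/- Degree-weighted mass conservation under the invariant: If π̂, r, x ∈ ℝ^n satisfy the invariant π̂ + α·r = α·x + (1−α)·P·π̂, then ∑_{s∈V} d(s)^β·π̂(s) = ∑_{s∈V} d(s)^β·(x(s) − r(s)). In particular, any vector π satisfying π = α·x + (1−α)·P·π satisfies ∑_{s∈V} d(s)^β·π(s) = ∑_{s∈V} d(s)^β·x(s). -/
/-- Degree-weighted mass conservation under the invariant:
`∑_s d(s)^β·π̂(s) = ∑_s d(s)^β·(x(s) − r(s))`; in particular any solution `π`
of `π = α·x + (1−α)·P·π` satisfies `∑_s d(s)^β·π(s) = ∑_s d(s)^β·x(s)`. -/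
theorem degree_weighted_mass_conservation {n : ℕ} (hn : 1 ≤ n)
    (A : Matrix (Fin n) (Fin n) ℝ) (hA_symm : A.IsSymm)
    (hA01 : ∀ s t, A s t = 0 ∨ A s t = 1)
    (d : Fin n → ℝ) (hd : ∀ s, d s = ∑ t, A s t) (hd1 : ∀ s, 1 ≤ d s)
    (β : ℝ) (hβ0 : 0 ≤ β) (hβ1 : β ≤ 1)
    (P : Matrix (Fin n) (Fin n) ℝ)
    (hP : ∀ s t, P s t = A s t / (d s ^ β * d t ^ (1 - β)))
    (α : ℝ) (hα0 : 0 < α) (hα1 : α < 1)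
    (πh r x : Fin n → ℝ)
    (hinv : πh + α • r = α • x + (1 - α) • (P.mulVec πh)) :
    (∑ s, d s ^ β * πh s = ∑ s, d s ^ β * (x s - r s)) ∧
    ∀ π : Fin n → ℝ, π = α • x + (1 - α) • (P.mulVec π) →
      ∑ s, d s ^ β * π s = ∑ s, d s ^ β * x s := by
  have hdpos : ∀ s, (0:ℝ) < d s := fun s => lt_of_lt_of_le one_pos (hd1 s)
  have key : ∀ v : Fin n → ℝ,
      ∑ s, d s ^ β * P.mulVec v s = ∑ s, d s ^ β * v s := by
    intro v
    have step : ∀ s t, d s ^ β * (P s t * v t) = A s t * (v t / d t ^ (1 - β)) := by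
      intro s t
      rw [hP]
      have h1 : d s ^ β ≠ 0 := (Real.rpow_pos_of_pos (hdpos s) β).ne'
      have hc : d s ^ β * (d s ^ β)⁻¹ = 1 := mul_inv_cancel₀ h1
      rw [div_eq_mul_inv, mul_inv, div_eq_mul_inv]
      linear_combination (A s t * v t * (d t ^ (1 - β))⁻¹) * hc
    calc ∑ s, d s ^ β * P.mulVec v s
        = ∑ s, ∑ t, d s ^ β * (P s t * v t) := by
          simp [Matrix.mulVec, dotProduct, Finset.mul_sum]
      _ = ∑ t, ∑ s, A s t * (v t / d t ^ (1 - β)) := by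
          rw [Finset.sum_comm]; simp_rw [step]
      _ = ∑ t, d t * (v t / d t ^ (1 - β)) := by
          refine Finset.sum_congr rfl fun t _ => ?_
          rw [← Finset.sum_mul]
          congr 1
          rw [hd t]
          exact Finset.sum_congr rfl fun s _ => hA_symm.apply t s
      _ = ∑ t, d t ^ β * v t := by
          refine Finset.sum_congr rfl fun t _ => ?_
          have h2 : d t ^ (1 - β) ≠ 0 := (Real.rpow_pos_of_pos (hdpos t) _).ne'
          have h3 : d t ^ β * d t ^ (1 - β) = d t := by
            rw [← Real.rpow_add (hdpos t)]; simp
          have hinv2 : d t ^ (1 - β) * (d t ^ (1 - β))⁻¹ = 1 := mul_inv_cancel₀ h2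
          rw [div_eq_mul_inv]
          linear_combination (-(v t * (d t ^ (1 - β))⁻¹)) * h3 + d t ^ β * v t * hinv2
  have hne : α ≠ 0 := ne_of_gt hα0
  constructor
  · have hs : ∑ s, d s ^ β * (πh s + α * r s)
        = ∑ s, d s ^ β * (α * x s + (1 - α) * P.mulVec πh s) := by
      refine Finset.sum_congr rfl fun s _ => ?_
      have := congrFun hinv s
      simp only [Pi.add_apply, Pi.smul_apply, smul_eq_mul] at this
      rw [this]
    simp only [mul_add, Finset.sum_add_distrib, mul_sub] at hs ⊢
    have e1 : ∀ c : ℝ, ∀ f : Fin n → ℝ, (∑ s, d s ^ β * (c * f s)) = c * ∑ s, d s ^ β * f s := by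
      intro c f; rw [Finset.mul_sum]; exact Finset.sum_congr rfl fun s _ => by ring
    rw [e1, e1, e1, key] at hs
    rw [Finset.sum_sub_distrib]
    nlinarith [hs]
  · intro π hπ
    have hs : ∑ s, d s ^ β * π s
        = ∑ s, d s ^ β * (α * x s + (1 - α) * P.mulVec π s) := by
      refine Finset.sum_congr rfl fun s _ => ?_
      conv_lhs => rw [hπ]
      simp only [Pi.add_apply, Pi.smul_apply, smul_eq_mul]
    simp only [mul_add] at hs
    rw [Finset.sum_add_distrib] at hs
    have e1 : ∀ c : ℝ, ∀ f : Fin n → ℝ, (∑ s, d s ^ β * (c * f s)) = c * ∑ s, d s ^ β * f s := by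
      intro c f; rw [Finset.mul_sum]; exact Finset.sum_congr rfl fun s _ => by ring
    rw [e1, e1, key] at hs
    nlinarith [hs]
end

section
/- Perturbation bound used in the proof of Theorem 2 (the 2ε lemma): Let β ∈ [0,1] and ε > 0. Let d : V → ℝ satisfy d(t) ≥ 1 for every t ∈ V, let u ≠ v be two distinct nodes, and define d′ : V → ℝ by d′(u) = d(u)+1, d′(v) = d(v)+1, and d′(t) = d(t) for t ∉ {u,v}. If r ∈ ℝ^n satisfies |r(t)| ≤ ε·d(t)^{1−β} for every t ∈ V, then |∑_{t∈V} (d′(t)^β − d(t)^β)·r(t)| ≤ 2ε. -/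
open Real in
lemma rpow_succ_sub_le {x β : ℝ} (hx : 1 ≤ x) (hβ0 : 0 ≤ β) (hβ1 : β ≤ 1) :
    (x + 1) ^ β - x ^ β ≤ x ^ (β - 1) := by
  have hx0 : 0 < x := lt_of_lt_of_le one_pos hx
  have h1 : (x + 1) ^ β = x ^ β * (1 + 1/x) ^ β := by
    have hxx : x * (1 + 1/x) = x + 1 := by field_simp
    rw [← hxx, Real.mul_rpow hx0.le (by positivity)]
  have h2 : (1 + 1/x) ^ β ≤ 1 + β * (1/x) :=
    rpow_one_add_le_one_add_mul_self (by have := one_div_pos.mpr hx0; linarith) hβ0 hβ1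
  have h3 : x ^ β * (1/x) = x ^ (β - 1) := by
    rw [one_div, ← Real.rpow_neg_one x, ← Real.rpow_add hx0, sub_eq_add_neg]
  calc (x + 1) ^ β - x ^ β ≤ x ^ β * (1 + β * (1/x)) - x ^ β := by
        rw [h1]; gcongr
    _ = β * (x ^ β * (1/x)) := by ring
    _ = β * x ^ (β - 1) := by rw [h3]
    _ ≤ 1 * x ^ (β - 1) := mul_le_mul_of_nonneg_right hβ1 (by positivity)
    _ = x ^ (β - 1) := one_mul _

open Classical in
/-- Perturbation bound used in the proof of Theorem 2 (the 2ε lemma):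
if the degrees of exactly two distinct nodes `u ≠ v` increase by one and
`|r(t)| ≤ ε·d(t)^{1−β}` for every node, then
`|∑_t (d′(t)^β − d(t)^β)·r(t)| ≤ 2ε`. -/
theorem perturbation_two_eps {n : ℕ} (hn : 2 ≤ n)
    (β : ℝ) (hβ0 : 0 ≤ β) (hβ1 : β ≤ 1)
    (ε : ℝ) (hε : 0 < ε)
    (d : Fin n → ℝ) (hd1 : ∀ t, 1 ≤ d t)
    (u v : Fin n) (huv : u ≠ v)
    (d' : Fin n → ℝ)
    (hd'u : d' u = d u + 1) (hd'v : d' v = d v + 1)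
    (hd'w : ∀ t, t ≠ u → t ≠ v → d' t = d t)
    (r : Fin n → ℝ) (hr : ∀ t, |r t| ≤ ε * d t ^ (1 - β)) :
    |∑ t, (d' t ^ β - d t ^ β) * r t| ≤ 2 * ε := by
  have key : ∀ t : Fin n, d' t = d t + 1 → |(d' t ^ β - d t ^ β) * r t| ≤ ε := by
    intro t ht
    have hx0 : 0 < d t := lt_of_lt_of_le one_pos (hd1 t)
    have h1 : |d' t ^ β - d t ^ β| ≤ d t ^ (β - 1) := by
      rw [abs_of_nonneg]
      · rw [ht]; exact rpow_succ_sub_le (hd1 t) hβ0 hβ1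
      · rw [ht, sub_nonneg]
        exact Real.rpow_le_rpow hx0.le (by linarith) hβ0
    calc |(d' t ^ β - d t ^ β) * r t| = |d' t ^ β - d t ^ β| * |r t| := abs_mul _ _
      _ ≤ d t ^ (β - 1) * (ε * d t ^ (1 - β)) := by
          apply mul_le_mul h1 (hr t) (abs_nonneg _) (by positivity)
      _ = ε * (d t ^ (β - 1) * d t ^ (1 - β)) := by ring
      _ = ε := by rw [← Real.rpow_add hx0]; norm_num
  have hsupp : ∀ t ∈ Finset.univ, t ∉ ({u, v} : Finset (Fin n)) →
      (d' t ^ β - d t ^ β) * r t = 0 := by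
    intro t _ ht
    simp only [Finset.mem_insert, Finset.mem_singleton, not_or] at ht
    rw [hd'w t ht.1 ht.2, sub_self, zero_mul]
  rw [← Finset.sum_subset (Finset.subset_univ ({u, v} : Finset (Fin n))) hsupp,
    Finset.sum_pair huv]
  calc |(d' u ^ β - d u ^ β) * r u + (d' v ^ β - d v ^ β) * r v|
      ≤ |(d' u ^ β - d u ^ β) * r u| + |(d' v ^ β - d v ^ β) * r v| := abs_add_le _ _
    _ ≤ ε + ε := add_le_add (key u hd'u) (key v hd'v)
    _ = 2 * ε := by ring
end

section
/- Batch update equals sequential update (worked identity for two insertions at a common endpoint): Let α ∈ (0,1), β ∈ [0,1], let d_u, d_v, d_y > 0, and let π̂_u, r_u, x_u, π̂_v, π̂_y be real numbers. Sequential update: set π̂₁ = π̂_u·(d_u+1)^{1−β}/d_u^{1−β}; r₁ = r_u + π̂₁·(d_u^{1−β} − (d_u+1)^{1−β})/(α·(d_u+1)^{1−β}); r₂ = r₁ + (1/α)·[ (π̂₁ + α·r₁ − α·x_u)·(d_u^β/(d_u+1)^β − 1) + (1−α)·π̂_v/((d_u+1)^β·d_v^{1−β}) ]; π̂₂ = π̂₁·(d_u+2)^{1−β}/(d_u+1)^{1−β};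 r₃ = r₂ + π̂₂·((d_u+1)^{1−β} − (d_u+2)^{1−β})/(α·(d_u+2)^{1−β}); r₄ = r₃ + (1/α)·[ (π̂₂ + α·r₃ − α·x_u)·((d_u+1)^β/(d_u+2)^β − 1) + (1−α)·π̂_y/((d_u+2)^β·d_y^{1−β}) ]. Batch update: set π̂′ = π̂_u·(d_u+2)^{1−β}/d_u^{1−β}; r′ = r_u + π̂′·(d_u^{1−β} − (d_u+2)^{1−β})/(α·(d_u+2)^{1−β}); r″ = r′ + (1/α)·[ (π̂′ + α·r′ − α·x_u)·(d_u^β/(d_u+2)^β − 1) + (1−α)·π̂_v/((d_u+2)^β·d_v^{1−β}) + (1−α)·π̂_y/((d_u+2)^β·d_y^{1−β}) ]. Then π̂₂ = π̂′ and r₄ = r″. -/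
/-- Batch update equals sequential update (worked identity for two insertions
of edges (u,v) and (u,y) at a common endpoint u): the sequential one-by-one
update and the simultaneous batch update produce the same final estimate and
residual at node u. -/
theorem batch_equals_sequential_update
    (α : ℝ) (hα0 : 0 < α) (hα1 : α < 1)
    (β : ℝ) (hβ0 : 0 ≤ β) (hβ1 : β ≤ 1)
    (du dv dy : ℝ) (hdu : 0 < du) (hdv : 0 < dv) (hdy : 0 < dy)
    (πhu ru xu πhv πhy : ℝ)
    -- sequential update
    (πh1 r1 r2 πh2 r3 r4 : ℝ)
    (hπh1 : πh1 = πhu * (du + 1) ^ (1 - β) / du ^ (1 - β))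
    (hr1 : r1 = ru + πh1 * (du ^ (1 - β) - (du + 1) ^ (1 - β))
        / (α * (du + 1) ^ (1 - β)))
    (hr2 : r2 = r1 + (1 / α) * ((πh1 + α * r1 - α * xu)
        * (du ^ β / (du + 1) ^ β - 1)
        + (1 - α) * πhv / ((du + 1) ^ β * dv ^ (1 - β))))
    (hπh2 : πh2 = πh1 * (du + 2) ^ (1 - β) / (du + 1) ^ (1 - β))
    (hr3 : r3 = r2 + πh2 * ((du + 1) ^ (1 - β) - (du + 2) ^ (1 - β))
        / (α * (du + 2) ^ (1 - β)))
    (hr4 : r4 = r3 + (1 / α) * ((πh2 + α * r3 - α * xu)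
        * ((du + 1) ^ β / (du + 2) ^ β - 1)
        + (1 - α) * πhy / ((du + 2) ^ β * dy ^ (1 - β))))
    -- batch update
    (πh' r' r'' : ℝ)
    (hπh' : πh' = πhu * (du + 2) ^ (1 - β) / du ^ (1 - β))
    (hr' : r' = ru + πh' * (du ^ (1 - β) - (du + 2) ^ (1 - β))
        / (α * (du + 2) ^ (1 - β)))
    (hr'' : r'' = r' + (1 / α) * ((πh' + α * r' - α * xu)
        * (du ^ β / (du + 2) ^ β - 1)
        + (1 - α) * πhv / ((du + 2) ^ β * dv ^ (1 - β))
        + (1 - α) * πhy / ((du + 2) ^ β * dy ^ (1 - β)))) :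
    πh2 = πh' ∧ r4 = r'' := by
  have hdu1 : (0:ℝ) < du + 1 := by linarith
  have hdu2 : (0:ℝ) < du + 2 := by linarith
  have hA : du ^ β * du ^ (1 - β) = du := by rw [← Real.rpow_add hdu]; simp
  have hB : (du + 1) ^ β * (du + 1) ^ (1 - β) = du + 1 := by
    rw [← Real.rpow_add hdu1]; simp
  have hC : (du + 2) ^ β * (du + 2) ^ (1 - β) = du + 2 := by
    rw [← Real.rpow_add hdu2]; simp
  have pA' := Real.rpow_pos_of_pos hdu (1 - β)
  have pB' := Real.rpow_pos_of_pos hdu1 (1 - β)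
  have pC' := Real.rpow_pos_of_pos hdu2 (1 - β)
  have pV := Real.rpow_pos_of_pos hdv (1 - β)
  have pY := Real.rpow_pos_of_pos hdy (1 - β)
  have hA2 : du ^ β = du / du ^ (1 - β) :=
    (eq_div_iff pA'.ne').mpr hA
  have hB2 : (du + 1) ^ β = (du + 1) / (du + 1) ^ (1 - β) :=
    (eq_div_iff pB'.ne').mpr hB
  have hC2 : (du + 2) ^ β = (du + 2) / (du + 2) ^ (1 - β) :=
    (eq_div_iff pC'.ne').mpr hC
  subst hπh1 hr1 hr2 hπh2 hr3 hr4 hπh' hr' hr''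
  rw [hA2, hB2, hC2]
  generalize du ^ (1 - β) = A' at *
  generalize (du + 1) ^ (1 - β) = B' at *
  generalize (du + 2) ^ (1 - β) = C' at *
  generalize dv ^ (1 - β) = V at *
  generalize dy ^ (1 - β) = Y at *
  constructor
  · field_simp
  · field_simp; ring
end
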